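/- arXiv:1503.08310 — 3 statements merged into one kernel-verified Lean document; each statement's English description precedes it below -/
import Mathlib

section
/- Let a, b ≥ 0 and 1 ≤ m < k and r ≤ ⌈k/m⌉ be integers, and consider the r-majority bootstrap percolation process on L(n,k) (with 2k+1 ≤ n). Suppose that at some state of the process every vertex of S^k_m(a,b) is active and every vertex of S^k_m(a+1,b) is m-good or active. Then, deterministically, every vertex of S^k_m(a+1,b) eventually becomes active. -/
open Finset Filter

namespace Maj

variable {V : Type*}

/-- The set of neighbours of `v` under the adjacency relation `Adj`. -/
def nbrSet (Adj : V → V → Prop) (v : V) : Set V := {u | Adj v u}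

/-- One round of the `r`-majority bootstrap percolation process: an inactive vertex `v`
becomes active if at least `⌈(deg v + r)/2⌉` of its neighbours are active, i.e. if
`deg v + r ≤ 2 * #(active neighbours)`. -/
def majStep (Adj : V → V → Prop) (r : ℤ) (A : Set V) : Set V :=
  A ∪ {v | ((nbrSet Adj v).ncard : ℤ) + r ≤ 2 * ((nbrSet Adj v ∩ A).ncard : ℤ)}

/-- The final (stationary) state of `r`-majority bootstrap percolation started from `A`. -/
def majFinal (Adj : V → V → Prop) (r : ℤ) (A : Set V) : Set V :=
  ⋃ s : ℕ, (majStep Adj r)^[s] A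

/-- One round of ordinary bootstrap percolation with activation threshold `j`. -/
def bootStep (Adj : V → V → Prop) (j : ℕ) (A : Set V) : Set V :=
  A ∪ {v | j ≤ (nbrSet Adj v ∩ A).ncard}

/-- The final state of ordinary bootstrap percolation `B_j(G;A)`. -/
def bootFinal (Adj : V → V → Prop) (j : ℕ) (A : Set V) : Set V :=
  ⋃ s : ℕ, (bootStep Adj j)^[s] A

/-- The vertex set of the `j`-core of the subgraph induced on `U`: the largest `W ⊆ U`
such that every vertex of `W` has at least `j` neighbours in `W`. -/
def coreSet (Adj : V → V → Prop) (j : ℤ) (U : Set V) : Set V :=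
  ⋃₀ {W : Set V | W ⊆ U ∧ ∀ v ∈ W, j ≤ ((nbrSet Adj v ∩ W).ncard : ℤ)}

open scoped Classical in
/-- The probability that the random initial set (each vertex initially active with
probability `p`, independently) satisfies the event `E`. -/
noncomputable def initProb (V : Type*) [Fintype V] (p : ℝ) (E : Set V → Prop) : ℝ :=
  ∑ A : Finset V, if E ↑A then p ^ A.card * (1 - p) ^ (Fintype.card V - A.card) else 0

/-- The toroidal grid `[n]²`. -/
abbrev Torus (n : ℕ) := ZMod n × ZMod n

/-- Adjacency in the graph `L(n,k)`: `v` is joined to `v + w` for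
`w ∈ {-k,…,k} × {-1,1}`. -/
def LAdj (n k : ℕ) (u v : Torus n) : Prop :=
  ∃ a b : ℤ, a.natAbs ≤ k ∧ (b = 1 ∨ b = -1) ∧ v = u + ((a : ZMod n), (b : ZMod n))

/-- `initProb` on the torus `[n]²` (defined as `0` in the degenerate case `n = 0`). -/
noncomputable def torusProb (n : ℕ) (p : ℝ) (E : Set (Torus n) → Prop) : ℝ :=
  if h : n = 0 then 0 else
    haveI : NeZero n := ⟨h⟩
    initProb (Torus n) p E

/-- A perfect matching of the vertex set, as a fixed-point-free involution. -/
def IsPerfectMatching (n : ℕ) (f : Torus n → Torus n) : Prop :=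
  Function.Involutive f ∧ ∀ v, f v ≠ v

/-- A `k`-admissible `r`-tuple of perfect matchings of `[n]²`: the matchings are pairwise
disjoint and the union with `L(n,k)` has no multiple edges. -/
def Admissible (n k : ℕ) {r : ℕ} (M : Fin r → Torus n → Torus n) : Prop :=
  (∀ i, IsPerfectMatching n (M i)) ∧
  (∀ i j, i ≠ j → ∀ v, M i v ≠ M j v) ∧
  (∀ i v, ¬ LAdj n k v (M i v))

/-- Adjacency in `L*(n,k,r) = M₁ ∪ ⋯ ∪ M_r ∪ L(n,k)`. -/
def LStarAdj (n k : ℕ) {r : ℕ} (M : Fin r → Torus n → Torus n) (u v : Torus n) : Prop :=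
  LAdj n k u v ∨ ∃ i, M i u = v

open scoped Classical in
/-- The probability that `M_r(L*(n,k,r); p)` disseminates, where the `r` perfect matchings
are chosen uniformly at random among `k`-admissible `r`-tuples and each vertex is
initially active with probability `p`, independently. -/
noncomputable def starDissemProb (n k r : ℕ) (p : ℝ) : ℝ :=
  if h : n = 0 then 0 else
    haveI : NeZero n := ⟨h⟩
    (∑ M ∈ Finset.univ.filter (fun M : Fin r → Torus n → Torus n => Admissible n k M),
        initProb (Torus n) p (fun A => majFinal (LStarAdj n k M) (r : ℤ) A = Set.univ)) /
      ((Finset.univ.filter (fun M : Fin r → Torus n → Torus n => Admissible n k M)).card : ℝ)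

/-- The probability that a uniformly random `k`-admissible `r`-tuple of perfect matchings
of `[n]²` satisfies the event `E`. -/
noncomputable def admProb (n k r : ℕ) (E : (Fin r → Torus n → Torus n) → Prop) : ℝ :=
  (Nat.card {M : Fin r → Torus n → Torus n // Admissible n k M ∧ E M} : ℝ) /
    (Nat.card {M : Fin r → Torus n → Torus n // Admissible n k M} : ℝ)

/-- `stepsLe Adj d u v`: `v` is reachable from `u` in at most `d` steps of `Adj`. -/
def stepsLe (Adj : V → V → Prop) : ℕ → V → V → Prop
  | 0, u, v => u = v
  | d + 1, u, v => stepsLe Adj d u v ∨ ∃ w, stepsLe Adj d u w ∧ Adj w v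

/-- Graph distance with respect to the relation `Adj`. -/
noncomputable def relDist (Adj : V → V → Prop) (u v : V) : ℕ :=
  sInf {d | stepsLe Adj d u v}

/-- The diameter of a set `B` : the maximal `Adj`-graph distance between two of its points. -/
noncomputable def setDiam (Adj : V → V → Prop) (B : Set V) : ℕ :=
  sSup {d | ∃ u ∈ B, ∃ v ∈ B, relDist Adj u v = d}

/-- `U` induces a connected subgraph with respect to `Adj`. -/
def ConnIn (Adj : V → V → Prop) (U : Set V) : Prop :=
  ∀ u ∈ U, ∀ v ∈ U, Relation.ReflTransGen (fun x y => x ∈ U ∧ y ∈ U ∧ Adj x y) u v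

/-- The connected component of `x` inside `Z` (with respect to `Adj`). -/
def compOf (Adj : V → V → Prop) (Z : Set V) (x : V) : Set V :=
  {y | y ∈ Z ∧ Relation.ReflTransGen (fun a b => a ∈ Z ∧ b ∈ Z ∧ Adj a b) x y}

/-- `B` is a connected component of the subgraph induced on `Z`. -/
def IsComponentOf (Adj : V → V → Prop) (Z B : Set V) : Prop :=
  ∃ x ∈ Z, B = compOf Adj Z x

/-- Adjacency in the toroidal square lattice `L₁(n)`. -/
def l1Adj (n : ℕ) (u v : Torus n) : Prop :=
  (u.1 = v.1 ∧ (v.2 = u.2 + 1 ∨ v.2 = u.2 - 1)) ∨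
    (u.2 = v.2 ∧ (v.1 = u.1 + 1 ∨ v.1 = u.1 - 1))

/-- Adjacency in the toroidal lattice with diagonals `L∞(n)`. -/
def lInfAdj (n : ℕ) (u v : Torus n) : Prop :=
  u ≠ v ∧ (v.1 = u.1 ∨ v.1 = u.1 + 1 ∨ v.1 = u.1 - 1) ∧
    (v.2 = u.2 ∨ v.2 = u.2 + 1 ∨ v.2 = u.2 - 1)

/-- Ceiling division: `cdiv k m = ⌈k/m⌉`. -/
def cdiv (k m : ℕ) : ℕ := (k + m - 1) / m

/-- The sequence `x_i` defining the set `S^k_m(a,b)`. -/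
def xseq (k m a b i : ℕ) : ℕ :=
  if m ≤ i then b + (m + a + 1 - i) * k
  else b + (a + 1) * k + cdiv k m * ∑ j ∈ Finset.Ico i m, j

/-- The set `S^k_m(a,b) ⊆ ℤ²`: the union over `|i| ≤ m+a+1` of `[-x_i, x_i] × {i}`. -/
def Scloud (k m a b : ℕ) : Set (ℤ × ℤ) :=
  {p | p.2.natAbs ≤ m + a + 1 ∧ p.1.natAbs ≤ xseq k m a b p.2.natAbs}

/-- Canonical projection `ℤ² → [n]²`. -/
def proj (n : ℕ) (p : ℤ × ℤ) : Torus n := ((p.1 : ZMod n), (p.2 : ZMod n))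

/-- A vertex `v` is `m`-good (with respect to the active set `A`) if each of the four sets
`v ± {1,…,k} × {1}`, `v ± {1,…,k} × {-1}` contains at least `2⌈k/m⌉` active vertices. -/
def MGood (n k m : ℕ) (A : Set (Torus n)) (v : Torus n) : Prop :=
  ∀ sx sy : ℤ, (sx = 1 ∨ sx = -1) → (sy = 1 ∨ sy = -1) →
    2 * cdiv k m ≤
      {u | u ∈ A ∧ ∃ a : ℤ, 1 ≤ a ∧ a ≤ (k : ℤ) ∧
        u = v + (((sx * a : ℤ) : ZMod n), ((sy : ℤ) : ZMod n))}.ncard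

/-- Endpoints `a_i` of the `t`-tessellation: `a_i = i*t` for `i < ⌊n/t⌋` and `a_{⌊n/t⌋} = n`. -/
def cellEnd (n t i : ℕ) : ℕ := if i = n / t then n else i * t

/-- Cells of the `t`-tessellation `T(n,t)`, identified with `[⌊n/t⌋]²`. -/
abbrev Cell (n t : ℕ) := Torus (n / t)

/-- The set of vertices of `[n]²` in the cell `c = (i,j)` of the `t`-tessellation:
`[a_i+1, a_{i+1}] × [a_j+1, a_{j+1}]`. -/
def cellSet (n t : ℕ) (c : Cell n t) : Set (Torus n) :=
  {v | ∃ x y : ℕ,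
    c.1.val * t + 1 ≤ x ∧ x ≤ cellEnd n t (c.1.val + 1) ∧
    c.2.val * t + 1 ≤ y ∧ y ≤ cellEnd n t (c.2.val + 1) ∧
    v = ((x : ZMod n), (y : ZMod n))}

/-- A cell is `m`-good if every vertex inside it or within `ℓ₁`-distance `32mk²` of it is
`m`-good or active. -/
def CellGood (n t k m : ℕ) (A : Set (Torus n)) (c : Cell n t) : Prop :=
  ∀ w : Torus n, (∃ v ∈ cellSet n t c, stepsLe (l1Adj n) (32 * m * k ^ 2) v w) →
    (MGood n k m A w ∨ w ∈ A)

/-- A cell is a seed if it contains an active translate of `S^k_m(0,0)`. -/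
def IsSeed (n t k m : ℕ) (A : Set (Torus n)) (c : Cell n t) : Prop :=
  ∃ w : Torus n, ∀ p ∈ Scloud k m 0 0,
    w + proj n p ∈ A ∧ w + proj n p ∈ cellSet n t c

/-- `Z ⊆ [N]²` is `ε`-ubiquitous (with `A = 10⁸`). -/
def Ubiquitous (N : ℕ) (ε : ℝ) (Z : Set (Torus N)) : Prop :=
  ConnIn (l1Adj N) Z ∧
  (1 - 10 ^ 8 * ε) * (N : ℝ) ^ 2 ≤ (Z.ncard : ℝ) ∧
  ∀ (j : ℕ) (B : Fin j → Set (Torus N)), 0 < j →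
    (∀ i, (B i).Nonempty ∧ B i ⊆ Zᶜ ∧ ConnIn (lInfAdj N) (B i)) →
    Pairwise (Function.onFun Disjoint B) →
    ∃ i : Fin j, (setDiam (lInfAdj N) (B i) : ℝ) ≤
      10 ^ 8 / Real.log (1 / ε) * Real.log ((N : ℝ) ^ 2 / (j : ℝ))

/-- A `2`-dependent site-percolation model on `[N]²`: the state of each cell `C` is
independent of the joint state of all cells at `ℓ₁`-distance at least `3` from `C`. -/
def TwoDependent (N : ℕ) (μ : PMF (Torus N → Bool)) : Prop :=
  ∀ (C : Torus N) (E : Set (Torus N → Bool)),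
    (∀ ω ω' : Torus N → Bool,
      (∀ C' : Torus N, ¬ stepsLe (l1Adj N) 2 C C' → ω C' = ω' C') → (ω ∈ E ↔ ω' ∈ E)) →
    ∀ b : Bool,
      μ.toOuterMeasure {ω | ω C = b ∧ ω ∈ E} =
        μ.toOuterMeasure {ω | ω C = b} * μ.toOuterMeasure E

/-- `B` is a largest `ℓ₁`-component of `Z`. -/
def IsLargestL1Component (N : ℕ) (Z B : Set (Torus N)) : Prop :=
  IsComponentOf (l1Adj N) Z B ∧
    ∀ B' : Set (Torus N), IsComponentOf (l1Adj N) Z B' → B'.ncard ≤ B.ncard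

/-- Expectation of a real random variable under a `PMF`. -/
noncomputable def pmfExp {α : Type*} (μ : PMF α) (f : α → ℝ) : ℝ :=
  ∑' a, (μ a).toReal * f a

/-- `N_d`: the number of cells belonging to `ℓ∞`-components of the complement of `G₀`
of `ℓ∞`-diameter exactly `d`. -/
noncomputable def NdCount (N : ℕ) (G₀ : Set (Torus N)) (d : ℕ) : ℕ :=
  {C : Torus N | ∃ B : Set (Torus N),
    IsComponentOf (lInfAdj N) G₀ᶜ B ∧ C ∈ B ∧ setDiam (lInfAdj N) B = d}.ncard

/-- `N'_d`: the number of cells belonging to `ℓ∞`-components of the complement of `G₀`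
of `ℓ∞`-diameter at least `d`. -/
noncomputable def NdGeCount (N : ℕ) (G₀ : Set (Torus N)) (d : ℕ) : ℕ :=
  {C : Torus N | ∃ B : Set (Torus N),
    IsComponentOf (lInfAdj N) G₀ᶜ B ∧ C ∈ B ∧ d ≤ setDiam (lInfAdj N) B}.ncard

/-- A collection of sets of cells `B₁,…,B_s` is stable with respect to the tuple `M` of
perfect matchings. -/
def StableColl (n t : ℕ) {r s : ℕ} (M : Fin r → Torus n → Torus n)
    (B : Fin s → Set (Cell n t)) : Prop :=
  ∀ j : Fin s, ∃ v : Fin 4 → Torus n, Function.Injective v ∧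
    ∀ l : Fin 4, (∃ c ∈ B j, v l ∈ cellSet n t c) ∧
      ∃ i : Fin r, ∃ j' : Fin s, ∃ c ∈ B j', M i (v l) ∈ cellSet n t c

/-- Adjacency in the `m`-dimensional grid `[n]^m` (no wrap-around). -/
def gridAdj (n m : ℕ) (u v : Fin m → Fin n) : Prop :=
  ∃ i : Fin m, ((u i : ℕ) + 1 = (v i : ℕ) ∨ (v i : ℕ) + 1 = (u i : ℕ)) ∧
    ∀ j : Fin m, j ≠ i → u j = v j

end Maj

open Maj

namespace Stmt3

open Finset

lemma two_le_cdiv {k m : ℕ} (hm1 : 1 ≤ m) (hmk : m < k) : 2 ≤ cdiv k m := by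
  rw [cdiv, Nat.le_div_iff_mul_le (by omega : 0 < m)]
  omega

lemma le_mul_cdiv {k m : ℕ} (hm1 : 1 ≤ m) : k ≤ m * cdiv k m := by
  rw [cdiv]
  have h1 := Nat.div_add_mod (k + m - 1) m
  have h2 : (k + m - 1) % m < m := Nat.mod_lt _ (by omega)
  omega

section xseq
variable {k m a b : ℕ}

lemma xseq_of_ge {i : ℕ} (h : m ≤ i) :
    xseq k m a b i = b + (m + a + 1 - i) * k := if_pos h

lemma xseq_of_lt {i : ℕ} (h : i < m) :
    xseq k m a b i = b + (a + 1) * k + cdiv k m * ∑ j ∈ Finset.Ico i m, j :=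
  if_neg (by omega)

lemma xseq_top : xseq k m a b (m + a + 1) = b := by
  rw [xseq_of_ge (by omega)]
  simp

lemma xseq_new : xseq k m (a + 1) b (m + a + 2) = b := by
  rw [xseq_of_ge (by omega)]
  have : m + (a + 1) + 1 - (m + a + 2) = 0 := by omega
  rw [this]; simp

lemma xd_ge {i : ℕ} (h1 : m ≤ i) (h2 : i ≤ m + a) :
    xseq k m a b i = xseq k m a b (i + 1) + k := by
  rw [xseq_of_ge h1, xseq_of_ge (by omega)]
  have : m + a + 1 - i = (m + a + 1 - (i + 1)) + 1 := by omega
  rw [this]; ring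

lemma xd_lt {i : ℕ} (h : i + 1 ≤ m) :
    xseq k m a b i = xseq k m a b (i + 1) + i * cdiv k m := by
  rw [xseq_of_lt (by omega : i < m),
    Finset.sum_eq_sum_Ico_succ_bot (by omega : i < m)]
  rcases eq_or_lt_of_le h with h' | h'
  · rw [← h', xseq_of_ge (by omega)]
    have : i + 1 + a + 1 - (i + 1) = a + 1 := by omega
    rw [this]
    have : Finset.Ico (i + 1) (i + 1) = ∅ := by simp
    rw [this]; simp; ring
  · rw [xseq_of_lt h']
    ring

lemma xseq_one (hm1 : 1 ≤ m) : xseq k m a b 1 = xseq k m a b 0 := by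
  rcases eq_or_lt_of_le hm1 with h | h
  · rw [xseq_of_ge (by omega), xseq_of_lt (by omega : 0 < m), ← h]
    have : 1 + a + 1 - 1 = a + 1 := by omega
    rw [this]
    have : Finset.Ico 0 1 = {0} := by decide
    rw [this]; simp
  · rw [xseq_of_lt (by omega : 1 < m), xseq_of_lt (by omega : 0 < m),
      Finset.sum_eq_sum_Ico_succ_bot (by omega : 0 < m)]
    simp

lemma xseq_succ_le {i : ℕ} (h : i + 1 ≤ m + a + 1) :
    xseq k m a b (i + 1) ≤ xseq k m a b i := by
  by_cases h' : i + 1 ≤ m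
  · rw [xd_lt (i := i) h']; exact Nat.le_add_right _ _
  · rw [xd_ge (i := i) (by omega) (by omega)]; omega

lemma xseq_k_le {i : ℕ} (h : i ≤ m + a) (hm1 : 1 ≤ m) : k ≤ xseq k m a b i := by
  by_cases h' : m ≤ i
  · rw [xseq_of_ge h']
    have h1 : 1 ≤ m + a + 1 - i := by omega
    have := Nat.mul_le_mul_right k h1
    omega
  · rw [xseq_of_lt (by omega)]
    have : 1 * k ≤ (a + 1) * k := Nat.mul_le_mul_right k (by omega)
    omega

lemma xseq_shift {i : ℕ} (h : i ≤ m + a + 1) :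
    xseq k m (a + 1) b i = xseq k m a b i + k := by
  by_cases h' : m ≤ i
  · rw [xseq_of_ge h', xseq_of_ge h']
    have : m + (a + 1) + 1 - i = (m + a + 1 - i) + 1 := by omega
    rw [this]; ring
  · rw [xseq_of_lt (by omega), xseq_of_lt (by omega)]
    ring

end xseq

end Stmt3

namespace Stmt3

open Finset

variable {V : Type*}

lemma subset_majStep (Adj : V → V → Prop) (r : ℤ) (A : Set V) :
    A ⊆ majStep Adj r A := Set.subset_union_left

lemma iterate_subset_succ (Adj : V → V → Prop) (r : ℤ) (A : Set V) (s : ℕ) :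
    (majStep Adj r)^[s] A ⊆ (majStep Adj r)^[s + 1] A := by
  rw [Function.iterate_succ_apply']
  exact subset_majStep _ _ _

lemma iterate_subset_majFinal (Adj : V → V → Prop) (r : ℤ) (A : Set V) (s : ℕ) :
    (majStep Adj r)^[s] A ⊆ majFinal Adj r A :=
  Set.subset_iUnion (fun s : ℕ => (majStep Adj r)^[s] A) s

lemma cast_inj_of_abs_lt {n : ℕ} [NeZero n] {t t' : ℤ} (hn : |t - t'| < n)
    (h : ((t : ZMod n) = (t' : ZMod n))) : t = t' := by
  have h2 : (n : ℤ) ∣ t - t' := by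
    rwa [← ZMod.intCast_zmod_eq_zero_iff_dvd, Int.cast_sub, sub_eq_zero]
  have h3 := Int.eq_zero_of_abs_lt_dvd h2 hn
  omega

lemma proj_add (n : ℕ) (X i u w : ℤ) :
    proj n (X + u, i + w) = proj n (X, i) + ((u : ZMod n), (w : ZMod n)) := by
  simp only [proj, Prod.mk_add_mk, Prod.mk.injEq]
  constructor <;> push_cast <;> ring

lemma proj_eq_add (n : ℕ) (X i t w : ℤ) :
    proj n (t, i + w) = proj n (X, i) + (((t - X : ℤ) : ZMod n), (w : ZMod n)) := by
  have h := proj_add n X i (t - X) w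
  rwa [show X + (t - X) = t by ring] at h

lemma nbr_finite (n k : ℕ) (v : Torus n) :
    (nbrSet (LAdj n k) v).Finite ∧ (nbrSet (LAdj n k) v).ncard ≤ 4 * k + 2 := by
  classical
  set NB : Finset (Torus n) :=
    (Finset.Icc (-(k : ℤ)) k ×ˢ ({1, -1} : Finset ℤ)).image
      (fun w => v + ((w.1 : ZMod n), (w.2 : ZMod n))) with hNB
  have hsub : nbrSet (LAdj n k) v ⊆ ↑NB := by
    rintro u ⟨a', b', h1, h2, h3⟩
    rw [hNB]
    simp only [Finset.coe_image, Set.mem_image, Finset.mem_coe, Finset.mem_product,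
      Finset.mem_Icc, Finset.mem_insert, Finset.mem_singleton]
    exact ⟨(a', b'), ⟨⟨by omega, by omega⟩, h2⟩, h3.symm⟩
  refine ⟨Set.Finite.subset NB.finite_toSet hsub, ?_⟩
  have h1 : (nbrSet (LAdj n k) v).ncard ≤ (↑NB : Set (Torus n)).ncard :=
    Set.ncard_le_ncard hsub NB.finite_toSet
  rw [Set.ncard_coe_finset] at h1
  have h2 : NB.card ≤ (2 * k + 1) * 2 := by
    calc NB.card ≤ ((Finset.Icc (-(k : ℤ)) k) ×ˢ ({1, -1} : Finset ℤ)).card :=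
          Finset.card_image_le
      _ = (Finset.Icc (-(k : ℤ)) k).card * ({1, -1} : Finset ℤ).card :=
          Finset.card_product _ _
      _ = (2 * k + 1) * 2 := by
          rw [Int.card_Icc]
          norm_num
          omega
  omega

lemma count' (n k m : ℕ) (r : ℤ) (hkn : 2 * k + 1 ≤ n) (hn5 : 5 ≤ n)
    (A Act : Set (Torus n)) (hAA : A ⊆ Act)
    (X i s ε : ℤ) (hs : s = 1 ∨ s = -1) (hε : ε = 1 ∨ ε = -1)
    (Lt Rt La Ra : ℤ)
    (hWt1 : X - k ≤ Lt) (hWt2 : Rt ≤ X + k)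
    (hWa1 : X - k ≤ La) (hWa2 : Ra ≤ X + k)
    (ht : ∀ t : ℤ, Lt ≤ t → t ≤ Rt → proj n (t, i - s) ∈ Act)
    (ha : ∀ t : ℤ, La ≤ t → t ≤ Ra → proj n (t, i + s) ∈ Act)
    (hsep : ∀ a' : ℤ, 1 ≤ a' → a' ≤ k → ¬(La ≤ X + ε * a' ∧ X + ε * a' ≤ Ra))
    (hM : MGood n k m A (proj n (X, i)))
    (hlen : (4 * (k : ℤ) + 2) + r ≤
      2 * (((Finset.Icc Lt Rt).card : ℤ) + ((Finset.Icc La Ra).card : ℤ)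
        + 2 * (cdiv k m : ℤ))) :
    ((nbrSet (LAdj n k) (proj n (X, i))).ncard : ℤ) + r
      ≤ 2 * ((nbrSet (LAdj n k) (proj n (X, i)) ∩ Act).ncard : ℤ) := by
  classical
  haveI : NeZero n := ⟨by omega⟩
  set v := proj n (X, i) with hv
  obtain ⟨hNBfin, hdeg⟩ := nbr_finite n k v
  -- three witness finsets
  set Ft : Finset (Torus n) := (Finset.Icc Lt Rt).image (fun t => proj n (t, i - s))
    with hFt
  set Fa : Finset (Torus n) := (Finset.Icc La Ra).image (fun t => proj n (t, i + s))
    with hFa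
  set G : Set (Torus n) := {u | u ∈ A ∧ ∃ a' : ℤ, 1 ≤ a' ∧ a' ≤ (k : ℤ) ∧
      u = v + (((ε * a' : ℤ) : ZMod n), ((s : ℤ) : ZMod n))} with hG
  have hGle : 2 * cdiv k m ≤ G.ncard := hM ε s hε hs
  have hGsub : G ⊆ nbrSet (LAdj n k) v ∩ Act := by
    rintro u ⟨huA, a', h1, h2, rfl⟩
    refine ⟨⟨ε * a', s, ?_, hs, rfl⟩, hAA huA⟩
    rcases hε with h | h <;> simp [h] <;> omega
  have hGfin : G.Finite :=
    hNBfin.subset (hGsub.trans Set.inter_subset_left)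
  set Fg := hGfin.toFinset with hFg
  have hGcard : G.ncard = Fg.card := (Set.ncard_eq_toFinset_card G hGfin)
  -- second coordinates
  have sndFt : ∀ u ∈ Ft, u.2 = ((i - s : ℤ) : ZMod n) := by
    intro u hu
    rw [hFt] at hu
    obtain ⟨t, _, rfl⟩ := Finset.mem_image.mp hu
    rfl
  have sndFa : ∀ u ∈ Fa, u.2 = ((i + s : ℤ) : ZMod n) := by
    intro u hu
    rw [hFa] at hu
    obtain ⟨t, _, rfl⟩ := Finset.mem_image.mp hu
    rfl
  have sndFg : ∀ u ∈ Fg, u.2 = ((i + s : ℤ) : ZMod n) := by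
    intro u hu
    rw [hFg, Set.Finite.mem_toFinset] at hu
    obtain ⟨-, a', -, -, rfl⟩ := hu
    show (i : ZMod n) + ((s : ℤ) : ZMod n) = _
    push_cast
    ring
  have hrowne : ((i - s : ℤ) : ZMod n) ≠ ((i + s : ℤ) : ZMod n) := by
    intro h
    have h2 : |(i - s) - (i + s)| < (n : ℤ) := by
      have he : (i - s) - (i + s) = -(2 * s) := by ring
      rw [he, abs_neg]
      rcases hs with h' | h' <;> rw [h'] <;> norm_num <;> omega
    have h3 := cast_inj_of_abs_lt h2 h
    rcases hs with h' | h' <;> omega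
  -- memberships
  have hFtsub : ↑Ft ⊆ nbrSet (LAdj n k) v ∩ Act := by
    intro u hu
    rw [hFt] at hu
    simp only [Finset.coe_image, Set.mem_image, Finset.mem_coe, Finset.mem_Icc] at hu
    obtain ⟨t, ⟨h1, h2⟩, rfl⟩ := hu
    refine ⟨⟨t - X, -s, by omega, by rcases hs with h | h <;> simp [h], ?_⟩, ht t h1 h2⟩
    rw [hv, show (t, i - s) = (t, i + (-s)) by ring_nf]
    exact proj_eq_add n X i t (-s)
  have hFasub : ↑Fa ⊆ nbrSet (LAdj n k) v ∩ Act := by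
    intro u hu
    rw [hFa] at hu
    simp only [Finset.coe_image, Set.mem_image, Finset.mem_coe, Finset.mem_Icc] at hu
    obtain ⟨t, ⟨h1, h2⟩, rfl⟩ := hu
    refine ⟨⟨t - X, s, by omega, hs, ?_⟩, ha t h1 h2⟩
    rw [hv]
    exact proj_eq_add n X i t s
  -- injectivity on intervals
  have hinj : ∀ L R : ℤ, X - k ≤ L → R ≤ X + k → ∀ w : ℤ,
      Set.InjOn (fun t : ℤ => proj n (t, i + w)) ↑(Finset.Icc L R) := by
    intro L R hL hR w t ht' t' ht'' h
    simp only [Finset.coe_Icc, Set.mem_Icc] at ht' ht''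
    have : (t : ZMod n) = (t' : ZMod n) := congrArg Prod.fst h
    exact cast_inj_of_abs_lt (abs_lt.mpr ⟨by omega, by omega⟩) this
  have cFt : Ft.card = (Finset.Icc Lt Rt).card := by
    rw [hFt]
    apply Finset.card_image_of_injOn
    intro t ht' t' ht'' h
    refine hinj Lt Rt hWt1 hWt2 (-s) ht' ht'' ?_
    show proj n (t, i + -s) = proj n (t', i + -s)
    rw [show i + -s = i - s from by ring]
    exact h
  have cFa : Fa.card = (Finset.Icc La Ra).card := by
    rw [hFa]
    exact Finset.card_image_of_injOn (hinj La Ra hWa1 hWa2 s)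
  -- disjointness
  have dTA : Disjoint Ft Fa := by
    rw [Finset.disjoint_left]
    intro u hu hu'
    exact hrowne ((sndFt u hu).symm.trans (sndFa u hu'))
  have dTG : Disjoint Ft Fg := by
    rw [Finset.disjoint_left]
    intro u hu hu'
    exact hrowne ((sndFt u hu).symm.trans (sndFg u hu'))
  have dAG : Disjoint Fa Fg := by
    rw [Finset.disjoint_left]
    intro u hu hu'
    rw [hFa] at hu
    obtain ⟨t, htm, rfl⟩ := Finset.mem_image.mp hu
    rw [Finset.mem_Icc] at htm
    rw [hFg, Set.Finite.mem_toFinset] at hu'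
    obtain ⟨-, a', h1, h2, heq⟩ := hu'
    have hfst : (t : ZMod n) = ((X + ε * a' : ℤ) : ZMod n) := by
      have h' := congrArg Prod.fst heq
      rw [hv] at h'
      simp only [proj, Prod.fst_add] at h'
      rw [h']
      push_cast
      ring
    have habs : -(k : ℤ) ≤ ε * a' ∧ ε * a' ≤ k := by
      rcases hε with h | h <;> rw [h]
      · rw [one_mul]; exact ⟨by omega, by omega⟩
      · rw [neg_one_mul]; exact ⟨by omega, by omega⟩
    have : t = X + ε * a' :=
      cast_inj_of_abs_lt (abs_lt.mpr ⟨by omega, by omega⟩) hfst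
    exact hsep a' h1 h2 ⟨by omega, by omega⟩
  -- assemble
  set U := Ft ∪ Fa ∪ Fg with hU
  have hUsub : ↑U ⊆ nbrSet (LAdj n k) v ∩ Act := by
    rw [hU]
    push_cast [Finset.coe_union]
    refine Set.union_subset (Set.union_subset hFtsub hFasub) ?_
    rw [hFg]
    rw [Set.Finite.coe_toFinset]
    exact hGsub
  have hUcard : U.card = Ft.card + Fa.card + Fg.card := by
    rw [hU, Finset.card_union_of_disjoint (by
        rw [Finset.disjoint_union_left]; exact ⟨dTG, dAG⟩),
      Finset.card_union_of_disjoint dTA]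
  have hfin : (nbrSet (LAdj n k) v ∩ Act).Finite :=
    hNBfin.subset Set.inter_subset_left
  have hle : U.card ≤ (nbrSet (LAdj n k) v ∩ Act).ncard := by
    have := Set.ncard_le_ncard hUsub hfin
    rwa [Set.ncard_coe_finset] at this
  have h2q : 2 * cdiv k m ≤ Fg.card := by omega
  push_cast at hlen ⊢
  omega

end Stmt3

namespace Stmt3

open Finset

def SclC (k m a b c : ℕ) : Set (ℤ × ℤ) :=
  {p | p.2.natAbs ≤ m + a + 1 ∧ p.1.natAbs ≤ xseq k m a b p.2.natAbs + c}

lemma step (n k m a b : ℕ) (r : ℤ) (hm1 : 1 ≤ m) (hmk : m < k)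
    (hr : r ≤ (cdiv k m : ℤ)) (hkn : 2 * k + 1 ≤ n)
    (A : Set (Torus n))
    (hgood : ∀ p ∈ Scloud k m (a + 1) b, MGood n k m A (proj n p) ∨ proj n p ∈ A)
    (c : ℕ) (hc : c + 1 ≤ k)
    (Act : Set (Torus n)) (hAA : A ⊆ Act)
    (hS : ∀ p ∈ SclC k m a b c, proj n p ∈ Act) :
    ∀ p ∈ SclC k m a b (c + 1), proj n p ∈ majStep (LAdj n k) r Act := by
  have hn5 : 5 ≤ n := by omega
  have hq2 : 2 ≤ cdiv k m := two_le_cdiv hm1 hmk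
  rintro ⟨t, i⟩ hp
  have hji : i.natAbs ≤ m + a + 1 := hp.1
  have hxi : t.natAbs ≤ xseq k m a b i.natAbs + (c + 1) := hp.2
  by_cases hin : t.natAbs ≤ xseq k m a b i.natAbs + c
  · exact subset_majStep _ _ _ (hS (t, i) ⟨hji, hin⟩)
  have hx : t.natAbs = xseq k m a b i.natAbs + c + 1 := by omega
  have hScl : ((t, i) : ℤ × ℤ) ∈ Scloud k m (a + 1) b := by
    refine ⟨show i.natAbs ≤ m + (a + 1) + 1 by omega, ?_⟩
    show t.natAbs ≤ xseq k m (a + 1) b i.natAbs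
    rw [xseq_shift hji]
    omega
  rcases hgood (t, i) hScl with hM | hA
  swap
  · exact subset_majStep _ _ _ (hAA hA)
  obtain ⟨j, hj⟩ : ∃ j : ℕ, j = i.natAbs := ⟨_, rfl⟩
  rw [← hj] at hji hxi hin hx
  obtain ⟨s, hs, hsi⟩ : ∃ s : ℤ, (s = 1 ∨ s = -1) ∧
      ((0 ≤ i ∧ s = 1) ∨ (i < 0 ∧ s = -1)) := by
    by_cases h : 0 ≤ i
    · exact ⟨1, Or.inl rfl, Or.inl ⟨h, rfl⟩⟩
    · exact ⟨-1, Or.inr rfl, Or.inr ⟨by omega, rfl⟩⟩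
  obtain ⟨ε, hε, hT⟩ : ∃ ε : ℤ, (ε = 1 ∨ ε = -1) ∧
      ((ε = 1 ∧ t = (xseq k m a b j : ℤ) + c + 1) ∨
       (ε = -1 ∧ t = -((xseq k m a b j : ℤ) + c + 1))) := by
    by_cases h : 0 ≤ t
    · exact ⟨1, Or.inl rfl, Or.inl ⟨rfl, by omega⟩⟩
    · exact ⟨-1, Or.inr rfl, Or.inr ⟨rfl, by omega⟩⟩
  obtain ⟨jt, hjtdef⟩ : ∃ jt : ℕ, jt = (i - s).natAbs := ⟨_, rfl⟩
  have hjt : (1 ≤ j ∧ jt = j - 1) ∨ (j = 0 ∧ jt = 1) := by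
    rw [hjtdef, hj]; omega
  have hja : (i + s).natAbs = j + 1 := by rw [hj]; omega
  have hjtle : jt ≤ m + a + 1 := by omega
  -- window fact: k ≤ x_j + x_jt
  have hkxjxt : k ≤ xseq k m a b j + xseq k m a b jt := by
    rcases Nat.lt_or_ge j (m + a + 1) with h | h
    · have := xseq_k_le (k := k) (m := m) (a := a) (b := b)
        (i := j) (by omega) hm1
      omega
    · have h1 : jt = m + a := by omega
      have h2 := xseq_k_le (k := k) (m := m) (a := a) (b := b)
        (i := m + a) le_rfl hm1
      rw [h1]
      omega
  -- toward interval
  obtain ⟨Wt, hWtdef⟩ : ∃ W : ℤ, W = (xseq k m a b jt : ℤ) + c := ⟨_, rfl⟩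
  obtain ⟨Lt, hLtdef⟩ : ∃ L : ℤ, L = max (-Wt) (t - k) := ⟨_, rfl⟩
  obtain ⟨Rt, hRtdef⟩ : ∃ R : ℤ, R = min Wt (t + k) := ⟨_, rfl⟩
  have ht : ∀ t' : ℤ, Lt ≤ t' → t' ≤ Rt → proj n (t', i - s) ∈ Act := by
    intro t' h1 h2
    refine hS (t', i - s) ⟨show (i - s).natAbs ≤ m + a + 1 by omega, ?_⟩
    show t'.natAbs ≤ xseq k m a b (i - s).natAbs + c
    rw [← hjtdef]
    omega
  have cardT : ((Finset.Icc Lt Rt).card : ℤ) = max (Rt + 1 - Lt) 0 := by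
    rw [Int.card_Icc, Int.toNat_eq_max]
  rcases Nat.lt_or_ge j (m + a + 1) with hjcase | hjcase
  · -- away row exists
    have hxaxj : xseq k m a b (j + 1) ≤ xseq k m a b j :=
      xseq_succ_le (by omega)
    have hkxj : k ≤ xseq k m a b j :=
      xseq_k_le (k := k) (m := m) (a := a) (b := b) (i := j) (by omega) hm1
    obtain ⟨Wa, hWadef⟩ : ∃ W : ℤ, W = (xseq k m a b (j + 1) : ℤ) + c := ⟨_, rfl⟩
    obtain ⟨La, hLadef⟩ : ∃ L : ℤ, L = max (-Wa) (t - k) := ⟨_, rfl⟩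
    obtain ⟨Ra, hRadef⟩ : ∃ R : ℤ, R = min Wa (t + k) := ⟨_, rfl⟩
    have ha : ∀ t' : ℤ, La ≤ t' → t' ≤ Ra → proj n (t', i + s) ∈ Act := by
      intro t' h1 h2
      refine hS (t', i + s) ⟨show (i + s).natAbs ≤ m + a + 1 by omega, ?_⟩
      show t'.natAbs ≤ xseq k m a b (i + s).natAbs + c
      rw [hja]
      omega
    have hsep : ∀ a' : ℤ, 1 ≤ a' → a' ≤ (k : ℤ) →
        ¬(La ≤ t + ε * a' ∧ t + ε * a' ≤ Ra) := by
      intro a' h1 h2 h3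
      obtain ⟨hA1, hA2⟩ := h3
      rcases hT with ⟨he, hTt⟩ | ⟨he, hTt⟩ <;> rw [he] at hA1 hA2
      · rw [one_mul] at hA1 hA2; omega
      · rw [neg_one_mul] at hA1 hA2; omega
    have cardA : ((Finset.Icc La Ra).card : ℤ) = max (Ra + 1 - La) 0 := by
      rw [Int.card_Icc, Int.toNat_eq_max]
    have hlen : (4 * (k : ℤ) + 2) + r ≤
        2 * (((Finset.Icc Lt Rt).card : ℤ) + ((Finset.Icc La Ra).card : ℤ)
          + 2 * (cdiv k m : ℤ)) := by
      rw [cardT, cardA]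
      rcases hjt with ⟨hj1, hjtv⟩ | ⟨hj0, hjtv⟩
      · rcases Nat.lt_or_ge j m with hjm | hjm
        · -- C2 : 1 ≤ j < m
          have hj' : j - 1 + 1 = j := by omega
          have E1 : xseq k m a b (j - 1) = xseq k m a b j + (j - 1) * cdiv k m := by
            have h := xd_lt (k := k) (m := m) (a := a) (b := b) (i := j - 1) (by omega)
            rwa [hj'] at h
          have E2 : xseq k m a b j = xseq k m a b (j + 1) + j * cdiv k m :=
            xd_lt (k := k) (m := m) (a := a) (b := b) (i := j) (by omega)
          have E3 : j * cdiv k m = (j - 1) * cdiv k m + cdiv k m := by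
            calc j * cdiv k m = (j - 1 + 1) * cdiv k m := by rw [hj']
              _ = (j - 1) * cdiv k m + cdiv k m := by rw [Nat.succ_mul]
          rw [hjtv] at hWtdef
          rcases hT with ⟨he, hTt⟩ | ⟨he, hTt⟩ <;> omega
        · rcases Nat.eq_or_lt_of_le hjm with hjm' | hjm'
          · -- C3 : j = m
            have E1 : xseq k m a b (j - 1) = xseq k m a b j + (j - 1) * cdiv k m := by
              have h := xd_lt (k := k) (m := m) (a := a) (b := b) (i := j - 1)
                (by omega)
              rwa [show j - 1 + 1 = j by omega] at h
            have E2 : xseq k m a b j = xseq k m a b (j + 1) + k :=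
              xd_ge (k := k) (m := m) (a := a) (b := b) (i := j) (by omega) (by omega)
            have E4 : k ≤ m * cdiv k m := le_mul_cdiv hm1
            have hmj : m = j - 1 + 1 := by omega
            have E3 : m * cdiv k m = (j - 1) * cdiv k m + cdiv k m := by
              calc m * cdiv k m = (j - 1 + 1) * cdiv k m := by rw [← hmj]
                _ = (j - 1) * cdiv k m + cdiv k m := Nat.succ_mul _ _
            rw [hjtv] at hWtdef
            rcases hT with ⟨he, hTt⟩ | ⟨he, hTt⟩ <;> omega
          · -- C4 : m < j ≤ m + a
            have E1 : xseq k m a b (j - 1) = xseq k m a b j + k := by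
              have h := xd_ge (k := k) (m := m) (a := a) (b := b) (i := j - 1)
                (by omega) (by omega)
              rwa [show j - 1 + 1 = j by omega] at h
            have E2 : xseq k m a b j = xseq k m a b (j + 1) + k :=
              xd_ge (k := k) (m := m) (a := a) (b := b) (i := j) (by omega) (by omega)
            rw [hjtv] at hWtdef
            rcases hT with ⟨he, hTt⟩ | ⟨he, hTt⟩ <;> omega
      · -- C1 : j = 0
        have E1 : xseq k m a b 1 = xseq k m a b 0 := xseq_one hm1
        have Ej : xseq k m a b j = xseq k m a b 0 := by rw [hj0]
        have Ea : xseq k m a b (j + 1) = xseq k m a b 1 := by rw [hj0]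
        rw [hjtv] at hWtdef
        rcases hT with ⟨he, hTt⟩ | ⟨he, hTt⟩ <;> omega
    refine Set.mem_union_right _ ?_
    show ((nbrSet (LAdj n k) (proj n (t, i))).ncard : ℤ) + r
      ≤ 2 * ((nbrSet (LAdj n k) (proj n (t, i)) ∩ Act).ncard : ℤ)
    exact count' n k m r hkn hn5 A Act hAA t i s ε hs hε Lt Rt La Ra
      (by omega) (by omega) (by omega) (by omega) ht ha hsep hM hlen
  · -- top row j = m + a + 1
    have hjcase' : j = m + a + 1 := by omega
    have hjtv : jt = m + a := by omega
    have E1 : xseq k m a b (m + a) = xseq k m a b (m + a + 1) + k :=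
      xd_ge (k := k) (m := m) (a := a) (b := b) (i := m + a) (by omega) (by omega)
    have Ej : xseq k m a b j = xseq k m a b (m + a + 1) := by rw [hjcase']
    rw [hjtv] at hWtdef
    have hsep : ∀ a' : ℤ, 1 ≤ a' → a' ≤ (k : ℤ) →
        ¬(t ≤ t + ε * a' ∧ t + ε * a' ≤ t - 1) := by
      intro a' h1 h2 h3
      omega
    have ha : ∀ t' : ℤ, t ≤ t' → t' ≤ t - 1 → proj n (t', i + s) ∈ Act := by
      intro t' h1 h2
      omega
    have cardA : ((Finset.Icc t (t - 1)).card : ℤ) = 0 := by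
      rw [Int.card_Icc]
      omega
    have hlen : (4 * (k : ℤ) + 2) + r ≤
        2 * (((Finset.Icc Lt Rt).card : ℤ) + ((Finset.Icc t (t - 1)).card : ℤ)
          + 2 * (cdiv k m : ℤ)) := by
      rw [cardT, cardA]
      rcases hT with ⟨he, hTt⟩ | ⟨he, hTt⟩ <;> omega
    refine Set.mem_union_right _ ?_
    show ((nbrSet (LAdj n k) (proj n (t, i))).ncard : ℤ) + r
      ≤ 2 * ((nbrSet (LAdj n k) (proj n (t, i)) ∩ Act).ncard : ℤ)
    exact count' n k m r hkn hn5 A Act hAA t i s ε hs hε Lt Rt t (t - 1)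
      (by omega) (by omega) (by omega) (by omega) ht ha hsep hM hlen

lemma stepTop (n k m a b : ℕ) (r : ℤ) (hm1 : 1 ≤ m) (hmk : m < k)
    (hr : r ≤ (cdiv k m : ℤ)) (hkn : 2 * k + 1 ≤ n)
    (A : Set (Torus n))
    (hgood : ∀ p ∈ Scloud k m (a + 1) b, MGood n k m A (proj n p) ∨ proj n p ∈ A)
    (Act : Set (Torus n)) (hAA : A ⊆ Act)
    (hS : ∀ p ∈ SclC k m a b k, proj n p ∈ Act) :
    ∀ t i : ℤ, i.natAbs = m + a + 2 → t.natAbs ≤ b →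
      proj n (t, i) ∈ majStep (LAdj n k) r Act := by
  intro t i hi hb
  have hn5 : 5 ≤ n := by omega
  have hq2 : 2 ≤ cdiv k m := two_le_cdiv hm1 hmk
  have hScl : ((t, i) : ℤ × ℤ) ∈ Scloud k m (a + 1) b := by
    refine ⟨show i.natAbs ≤ m + (a + 1) + 1 by omega, ?_⟩
    show t.natAbs ≤ xseq k m (a + 1) b i.natAbs
    rw [hi, xseq_new]
    exact hb
  rcases hgood (t, i) hScl with hM | hA
  swap
  · exact subset_majStep _ _ _ (hAA hA)
  obtain ⟨s, hs, hsi⟩ : ∃ s : ℤ, (s = 1 ∨ s = -1) ∧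
      ((0 ≤ i ∧ s = 1) ∨ (i < 0 ∧ s = -1)) := by
    by_cases h : 0 ≤ i
    · exact ⟨1, Or.inl rfl, Or.inl ⟨h, rfl⟩⟩
    · exact ⟨-1, Or.inr rfl, Or.inr ⟨by omega, rfl⟩⟩
  have hjt : (i - s).natAbs = m + a + 1 := by omega
  have htop : xseq k m a b (m + a + 1) = b := xseq_top
  have ht : ∀ t' : ℤ, t - k ≤ t' → t' ≤ t + k → proj n (t', i - s) ∈ Act := by
    intro t' h1 h2
    refine hS (t', i - s) ⟨show (i - s).natAbs ≤ m + a + 1 by omega, ?_⟩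
    show t'.natAbs ≤ xseq k m a b (i - s).natAbs + k
    rw [hjt, htop]
    omega
  refine Set.mem_union_right _ ?_
  show ((nbrSet (LAdj n k) (proj n (t, i))).ncard : ℤ) + r
    ≤ 2 * ((nbrSet (LAdj n k) (proj n (t, i)) ∩ Act).ncard : ℤ)
  refine count' n k m r hkn hn5 A Act hAA t i s 1 hs (Or.inl rfl)
    (t - k) (t + k) t (t - 1)
    (by omega) (by omega) (by omega) (by omega) ht
    (fun t' h1 h2 => absurd (h1.trans h2) (by omega))
    (fun a' h1 h2 h3 => by omega) hM ?_
  rw [Int.card_Icc, Int.card_Icc]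
  omega

lemma subset_iterate {V : Type*} (Adj : V → V → Prop) (r : ℤ) (A : Set V) (c : ℕ) :
    A ⊆ (majStep Adj r)^[c] A := by
  induction c with
  | zero => exact subset_rfl
  | succ c ih => exact ih.trans (iterate_subset_succ Adj r A c)

end Stmt3

/-- Lemma 2.1 of the paper. If `S^k_m(a,b)` is active and all vertices in
`S^k_m(a+1,b)` are `m`-good or active, then deterministically `S^k_m(a+1,b)` eventually
becomes active in the `r`-majority bootstrap percolation process on `L(n,k)`. -/
theorem statement_3 (n k m a b : ℕ) (r : ℤ) (hm1 : 1 ≤ m) (hmk : m < k)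
    (hr : r ≤ (cdiv k m : ℤ)) (hkn : 2 * k + 1 ≤ n)
    (A : Set (Torus n))
    (hact : ∀ p ∈ Scloud k m a b, proj n p ∈ A)
    (hgood : ∀ p ∈ Scloud k m (a + 1) b, MGood n k m A (proj n p) ∨ proj n p ∈ A) :
    ∀ p ∈ Scloud k m (a + 1) b, proj n p ∈ majFinal (LAdj n k) r A := by
  have hstage : ∀ c : ℕ, c ≤ k →
      ∀ p ∈ Stmt3.SclC k m a b c, proj n p ∈ (majStep (LAdj n k) r)^[c] A := by
    intro c
    induction c with
    | zero =>
      intro _ p hp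
      refine hact p ⟨hp.1, ?_⟩
      have h2 := hp.2
      show p.1.natAbs ≤ xseq k m a b p.2.natAbs
      omega
    | succ c ih =>
      intro hc p hp
      rw [Function.iterate_succ_apply']
      exact Stmt3.step n k m a b r hm1 hmk hr hkn A hgood c hc _
        (Stmt3.subset_iterate _ _ _ c) (ih (by omega)) p hp
  rintro ⟨t, i⟩ hp
  have h1 : i.natAbs ≤ m + (a + 1) + 1 := hp.1
  have h2 : t.natAbs ≤ xseq k m (a + 1) b i.natAbs := hp.2
  rcases Nat.lt_or_ge i.natAbs (m + a + 2) with hc | hc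
  · have hmem : ((t, i) : ℤ × ℤ) ∈ Stmt3.SclC k m a b k := by
      refine ⟨show i.natAbs ≤ m + a + 1 by omega, ?_⟩
      show t.natAbs ≤ xseq k m a b i.natAbs + k
      rw [← Stmt3.xseq_shift (by omega : i.natAbs ≤ m + a + 1)]
      exact h2
    exact Stmt3.iterate_subset_majFinal _ _ _ k (hstage k le_rfl (t, i) hmem)
  · have hi : i.natAbs = m + a + 2 := by omega
    have hbb : t.natAbs ≤ b := by
      rw [hi, Stmt3.xseq_new] at h2
      exact h2
    have hstep := Stmt3.stepTop n k m a b r hm1 hmk hr hkn A hgood _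
      (Stmt3.subset_iterate _ _ _ k) (hstage k le_rfl) t i hi hbb
    have h3 : proj n (t, i) ∈ (majStep (LAdj n k) r)^[k + 1] A := by
      rw [Function.iterate_succ_apply']
      exact hstep
    exact Stmt3.iterate_subset_majFinal _ _ _ (k + 1) h3
end

section
/- Let k, m, r be integers with 1 ≤ m < k and r ≤ ⌈k/m⌉, and consider the r-majority bootstrap percolation process on L(n,k). Suppose U ⊆ [n]² satisfies: U is ℓ₁-connected; all vertices of [n]² within ℓ₁-distance at most 32mk² from U are m-good or active; and U contains an active set S that is a translate of S^k_m(0,0). Then, deterministically, every vertex of U eventually becomes active. -/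
open Finset Filter

open Maj

namespace MajAux
open Maj
variable {V : Type*}

open Maj

lemma proj_add (n : ℕ) (p q : ℤ × ℤ) : proj n (p + q) = proj n p + proj n q := by
  simp [proj, Prod.ext_iff]

lemma proj_zero (n : ℕ) : proj n (0, 0) = 0 := by
  simp [proj]

lemma zcast_inj {n : ℕ} {x y : ℤ} (h : (x : ZMod n) = y) (hlt : (x - y).natAbs < n) : x = y := by
  have h2 : ((x - y : ℤ) : ZMod n) = 0 := by push_cast; rw [h]; ring
  have h3 := (ZMod.intCast_zmod_eq_zero_iff_dvd _ _).mp h2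
  have h4 : (n:ℤ) ∣ ((x - y).natAbs : ℤ) := (Int.dvd_natAbs).mpr h3
  have h5 : n ∣ (x - y).natAbs := Int.ofNat_dvd.mp h4
  have h6 : (x - y).natAbs = 0 := Nat.eq_zero_of_dvd_of_lt h5 hlt
  omega

lemma subset_majStep (Adj : V → V → Prop) (r : ℤ) (A : Set V) : A ⊆ majStep Adj r A :=
  Set.subset_union_left

lemma iter_mono (Adj : V → V → Prop) (r : ℤ) (A : Set V) {s t : ℕ} (h : s ≤ t) :
    (majStep Adj r)^[s] A ⊆ (majStep Adj r)^[t] A := by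
  induction h with
  | refl => exact subset_rfl
  | step h ih =>
    rw [Function.iterate_succ_apply']
    exact ih.trans (subset_majStep _ _ _)

lemma subset_majFinal (Adj : V → V → Prop) (r : ℤ) (A : Set V) : A ⊆ majFinal Adj r A :=
  Set.subset_iUnion (fun s : ℕ => (majStep Adj r)^[s] A) 0

lemma majFinal_closed {V : Type*} [Finite V] (Adj : V → V → Prop) (r : ℤ) (A : Set V) (v : V)
    (h : ((nbrSet Adj v).ncard : ℤ) + r ≤ 2 * ((nbrSet Adj v ∩ majFinal Adj r A).ncard : ℤ)) :
    v ∈ majFinal Adj r A := by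
  classical
  set F := nbrSet Adj v ∩ majFinal Adj r A with hF
  have hFfin : F.Finite := Set.toFinite F
  have hex : ∀ u ∈ majFinal Adj r A, ∃ s : ℕ, u ∈ (majStep Adj r)^[s] A := by
    intro u hu; exact Set.mem_iUnion.mp hu
  choose! sfun hsfun using hex
  set S := hFfin.toFinset.sup sfun with hS
  have hsub : F ⊆ nbrSet Adj v ∩ (majStep Adj r)^[S] A := by
    intro u hu
    refine ⟨hu.1, iter_mono Adj r A (Finset.le_sup (hFfin.mem_toFinset.mpr hu)) (hsfun u hu.2)⟩
  have hcard : (F.ncard : ℤ) ≤ ((nbrSet Adj v ∩ (majStep Adj r)^[S] A).ncard : ℤ) := by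
    exact_mod_cast Set.ncard_le_ncard hsub (Set.toFinite _)
  have hv : v ∈ majStep Adj r ((majStep Adj r)^[S] A) := by
    right; exact le_trans h (by linarith)
  have : v ∈ (majStep Adj r)^[S+1] A := by
    rw [Function.iterate_succ_apply']; exact hv
  exact Set.mem_iUnion.mpr ⟨S+1, this⟩

lemma nbrSet_eq {n k : ℕ} (v : Torus n) :
    nbrSet (LAdj n k) v = ↑(((Finset.Icc (-(k:ℤ)) k) ×ˢ ({1,-1} : Finset ℤ)).image
      (fun p => v + ((p.1 : ZMod n), (p.2 : ZMod n)))) := by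
  ext u
  simp only [nbrSet, Set.mem_setOf_eq, LAdj, Finset.coe_image, Set.mem_image, Finset.mem_coe,
    Finset.mem_product, Finset.mem_Icc, Finset.mem_insert, Finset.mem_singleton]
  constructor
  · rintro ⟨a, b, ha, hb, rfl⟩
    exact ⟨(a, b), ⟨by omega, hb⟩, rfl⟩
  · rintro ⟨⟨a, b⟩, ⟨ha, hb⟩, rfl⟩
    exact ⟨a, b, by omega, hb, rfl⟩

lemma ncard_nbrSet {n k : ℕ} (hkn : 2*k+1 ≤ n) (hk2 : 2 ≤ k) (v : Torus n) :
    (nbrSet (LAdj n k) v).ncard = 4*k+2 := by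
  rw [nbrSet_eq, Set.ncard_coe_finset]
  rw [Finset.card_image_of_injOn]
  · rw [Finset.card_product, Int.card_Icc]
    have : ({1,-1} : Finset ℤ).card = 2 := by decide
    rw [this]
    omega
  · rintro ⟨a, b⟩ hab ⟨a', b'⟩ hab' heq
    simp only [Finset.mem_coe, Finset.mem_product, Finset.mem_Icc, Finset.mem_insert,
      Finset.mem_singleton] at hab hab'
    have h1 : ((a : ZMod n), (b : ZMod n)) = ((a' : ZMod n), (b' : ZMod n)) :=
      add_left_cancel heq
    have h2 : (a : ZMod n) = (a' : ZMod n) := congrArg Prod.fst h1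
    have h3 : (b : ZMod n) = (b' : ZMod n) := congrArg Prod.snd h1
    have ha : a = a' := zcast_inj h2 (by omega)
    have hb : b = b' := zcast_inj h3 (by rcases hab.2 with h | h <;> rcases hab'.2 with h' | h' <;> omega)
    simp [ha, hb]


open Maj

lemma cdiv_two {k m : ℕ} (hm : 1 ≤ m) (hmk : m < k) : 2 ≤ cdiv k m := by
  rw [cdiv, Nat.le_div_iff_mul_le (by omega)]
  omega

lemma le_mul_cdiv {k m : ℕ} (hm : 1 ≤ m) : k ≤ m * cdiv k m := by
  have h := Nat.div_add_mod (k + m - 1) m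
  have h2 : (k + m - 1) % m < m := Nat.mod_lt _ (by omega)
  rw [cdiv]
  omega

lemma mul_cdiv_le {k m : ℕ} (hm : 1 ≤ m) (hk : 1 ≤ k) : m * cdiv k m ≤ k + m - 1 := by
  rw [cdiv, Nat.mul_comm]
  exact Nat.div_mul_le_self _ _

lemma cdiv_le_k {k m : ℕ} (hm : 1 ≤ m) (hk : 1 ≤ k) : cdiv k m ≤ k := by
  have h := mul_cdiv_le (k := k) hm hk
  have h2 : k + m - 1 ≤ k * m := by
    obtain ⟨k', rfl⟩ := Nat.exists_eq_add_of_le hk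
    obtain ⟨m', rfl⟩ := Nat.exists_eq_add_of_le hm
    have : (1 + k') * (1 + m') = 1 + k' + m' + k' * m' := by ring
    omega
  have : m * cdiv k m ≤ k * m := le_trans h h2
  have := Nat.le_of_mul_le_mul_left (by linarith [this, Nat.mul_comm k m] : m * cdiv k m ≤ m * k) (by omega : 0 < m)
  exact this

lemma xseq_succ_b (k m a b i : ℕ) : xseq k m a (b+1) i = xseq k m a b i + 1 := by
  unfold xseq; split <;> omega

lemma xseq_mono_b {b b' : ℕ} (k m a i : ℕ) (h : b ≤ b') : xseq k m a b i ≤ xseq k m a b' i := by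
  unfold xseq; split <;> omega

lemma xseq_step_high {k m a b i : ℕ} (h1 : m ≤ i) (h2 : i ≤ m + a) :
    xseq k m a b i = xseq k m a b (i+1) + k := by
  rw [xseq, xseq, if_pos h1, if_pos (by omega : m ≤ i + 1)]
  have e : m + a + 1 - i = (m + a + 1 - (i+1)) + 1 := by omega
  rw [e, add_mul, one_mul]
  omega

lemma xseq_step_low {k m a b i : ℕ} (h : i < m) :
    xseq k m a b i = xseq k m a b (i+1) + i * cdiv k m := by
  rcases Nat.lt_or_ge (i+1) m with h2 | h2
  · rw [xseq, xseq, if_neg (by omega), if_neg (by omega)]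
    rw [Finset.sum_eq_sum_Ico_succ_bot (by omega : i < m), Nat.mul_add, Nat.mul_comm (cdiv k m) i]
    omega
  · have h3 : i + 1 = m := by omega
    rw [xseq, xseq, if_neg (by omega), if_pos (by omega)]
    have e1 : Finset.Ico i m = {i} := by
      rw [← h3]; exact Nat.Ico_succ_singleton i
    rw [e1, Finset.sum_singleton]
    have e2 : m + a + 1 - (i+1) = a + 1 := by omega
    rw [e2, Nat.mul_comm (cdiv k m) i]

lemma xseq_anti {k m a b : ℕ} : ∀ {i i' : ℕ}, i ≤ i' → xseq k m a b i' ≤ xseq k m a b i := by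
  have hsucc : ∀ i, xseq k m a b (i+1) ≤ xseq k m a b i := by
    intro i
    rcases Nat.lt_or_ge i m with h | h
    · rw [xseq_step_low h]; omega
    · rcases Nat.lt_or_ge i (m+a+1) with h2 | h2
      · rw [xseq_step_high h (by omega)]; omega
      · rw [xseq, xseq, if_pos h, if_pos (by omega)]
        have : m + a + 1 - (i+1) ≤ m + a + 1 - i := by omega
        have := Nat.mul_le_mul_right k this
        omega
  intro i i' h
  exact antitone_nat_of_succ_le hsucc h

lemma xseq_tip (k m a b : ℕ) : xseq k m a b (m+a+1) = b := by
  rw [xseq, if_pos (by omega)]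
  have : m + a + 1 - (m+a+1) = 0 := by omega
  rw [this]; omega

lemma xseq_ge {k m a b i : ℕ} (h : i ≤ m + a) : b + k ≤ xseq k m a b i := by
  have h1 : xseq k m a b (m+a) ≤ xseq k m a b i := xseq_anti h
  have h2 : xseq k m a b (m+a) = b + k := by
    rw [xseq, if_pos (by omega)]
    have : m + a + 1 - (m+a) = 1 := by omega
    rw [this, one_mul]
  omega

lemma xseq_a_shift {k m a b i : ℕ} (h : i ≤ m + a + 1) :
    xseq k m (a+1) b i = xseq k m a (b+k) i := by
  rcases Nat.lt_or_ge i m with h2 | h2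
  · rw [xseq, xseq, if_neg (by omega), if_neg (by omega)]
    have : (a + 1 + 1) * k = k + (a+1) * k := by ring
    omega
  · rw [xseq, xseq, if_pos h2, if_pos h2]
    have e : m + (a+1) + 1 - i = (m + a + 1 - i) + 1 := by omega
    rw [e, add_mul, one_mul]
    omega

lemma xseq_zero_one {k m a b : ℕ} (hm : 1 ≤ m) : xseq k m a b 0 = xseq k m a b 1 := by
  have h := xseq_step_low (k := k) (a := a) (b := b) (by omega : 0 < m)
  simpa using h


lemma add_pair_inj {n : ℕ} (v : Torus n) {x₁ y₁ x₂ y₂ : ℤ}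
    (h : v + ((x₁ : ZMod n), (y₁ : ZMod n)) = v + ((x₂ : ZMod n), (y₂ : ZMod n)))
    (hx : (x₁ - x₂).natAbs < n) (hy : (y₁ - y₂).natAbs < n) : x₁ = x₂ ∧ y₁ = y₂ := by
  have h1 : ((x₁ : ZMod n), (y₁ : ZMod n)) = ((x₂ : ZMod n), (y₂ : ZMod n)) := add_left_cancel h
  have h2 : (x₁ : ZMod n) = (x₂ : ZMod n) := congrArg Prod.fst h1
  have h3 : (y₁ : ZMod n) = (y₂ : ZMod n) := congrArg Prod.snd h1
  exact ⟨zcast_inj h2 hx, zcast_inj h3 hy⟩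

lemma act {n k m : ℕ} {r : ℤ} {A : Set (Torus n)} (hkn : 2*k+1 ≤ n) (hk2 : 2 ≤ k)
    (v : Torus n) (σ τ : ℤ) (hσ : σ = 1 ∨ σ = -1) (hτ : τ = 1 ∨ τ = -1)
    (L D : Finset ℤ) (hL1 : L ⊆ Finset.Icc (-(k:ℤ)) 0) (hD1 : D ⊆ Finset.Icc (-(k:ℤ)) k)
    (hLA : ∀ a ∈ L, v + (((σ*a : ℤ) : ZMod n), ((τ:ℤ) : ZMod n)) ∈ majFinal (LAdj n k) r A)
    (hDA : ∀ a ∈ D, v + (((σ*a : ℤ) : ZMod n), ((-τ:ℤ) : ZMod n)) ∈ majFinal (LAdj n k) r A)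
    (hcard : 4*(k:ℤ)+2+r ≤ 2*((L.card : ℤ) + (D.card : ℤ) + 2*(cdiv k m : ℤ)))
    (hgood : MGood n k m A v ∨ v ∈ A) :
    v ∈ majFinal (LAdj n k) r A := by
  have hn5 : 5 ≤ n := by omega
  haveI : NeZero n := ⟨by omega⟩
  rcases hgood with hg | hA
  swap
  · exact subset_majFinal _ _ _ hA
  classical
  have hσ0 : σ ≠ 0 := by rcases hσ with h | h <;> simp [h]
  set Φ := majFinal (LAdj n k) r A with hΦ
  have harm := hg σ τ hσ hτ
  set Marm : Set (Torus n) := {u | u ∈ A ∧ ∃ a : ℤ, 1 ≤ a ∧ a ≤ (k:ℤ) ∧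
      u = v + (((σ*a:ℤ) : ZMod n), ((τ:ℤ) : ZMod n))} with hM
  set fL : ℤ → Torus n := fun a => v + (((σ*a:ℤ) : ZMod n), ((τ:ℤ) : ZMod n)) with hfL
  set fD : ℤ → Torus n := fun a => v + (((σ*a:ℤ) : ZMod n), ((-τ:ℤ) : ZMod n)) with hfD
  -- injectivity of the parametrisations
  have hcancel : ∀ a a' : ℤ, a.natAbs ≤ k → a'.natAbs ≤ k →
      ((σ*a : ℤ) : ZMod n) = ((σ*a' : ℤ) : ZMod n) → a = a' := by
    intro a a' ha ha' h
    have h2 : σ*a = σ*a' := zcast_inj h (by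
      rcases hσ with h3 | h3 <;> subst h3 <;> simp only [one_mul, neg_mul] <;> omega)
    exact mul_left_cancel₀ hσ0 h2
  have habs : ∀ a : ℤ, a ∈ Finset.Icc (-(k:ℤ)) k → a.natAbs ≤ k := by
    intro a ha; rw [Finset.mem_Icc] at ha; omega
  have hLD : ∀ a : ℤ, a ∈ L → a.natAbs ≤ k := fun a ha => habs a (by
    have := hL1 ha; rw [Finset.mem_Icc] at this ⊢; omega)
  have hDD : ∀ a : ℤ, a ∈ D → a.natAbs ≤ k := fun a ha => habs a (hD1 ha)
  have hinjL : Set.InjOn fL L := by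
    intro a ha a' ha' h
    exact hcancel a a' (hLD a ha) (hLD a' ha') (congrArg Prod.fst (add_left_cancel h))
  have hinjD : Set.InjOn fD D := by
    intro a ha a' ha' h
    exact hcancel a a' (hDD a ha) (hDD a' ha') (congrArg Prod.fst (add_left_cancel h))
  -- the three sets of active neighbours
  set SL : Set (Torus n) := ↑(L.image fL) with hSL
  set SD : Set (Torus n) := ↑(D.image fD) with hSD
  have hτabs : ∀ y : ℤ, y = τ ∨ y = -τ → y.natAbs ≤ k := by
    intro y hy; rcases hτ with h | h <;> rcases hy with h' | h' <;> subst h <;> omega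
  have hτne : ((τ:ℤ) : ZMod n) ≠ ((-τ:ℤ) : ZMod n) := by
    intro h
    have := zcast_inj h (by rcases hτ with h' | h' <;> subst h' <;> omega)
    rcases hτ with h' | h' <;> omega
  -- memberships in nbrSet ∩ Φ
  have hσa_abs : ∀ a : ℤ, a.natAbs ≤ k → (σ*a).natAbs ≤ k := by
    intro a ha
    rcases hσ with h | h <;> subst h <;>
      simpa [neg_mul, one_mul, Int.natAbs_neg] using ha
  have hnbrL : ∀ a ∈ L, fL a ∈ nbrSet (LAdj n k) v := by
    intro a ha
    exact ⟨σ*a, τ, hσa_abs a (hLD a ha), hτ, rfl⟩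
  have hnbrD : ∀ a ∈ D, fD a ∈ nbrSet (LAdj n k) v := by
    intro a ha
    refine ⟨σ*a, -τ, hσa_abs a (hDD a ha), ?_, rfl⟩
    rcases hτ with h | h <;> subst h <;> simp
  have hsubL : SL ⊆ nbrSet (LAdj n k) v ∩ Φ := by
    rintro u hu
    rw [hSL, Finset.coe_image] at hu
    obtain ⟨a, ha, rfl⟩ := hu
    exact ⟨hnbrL a ha, hLA a ha⟩
  have hsubD : SD ⊆ nbrSet (LAdj n k) v ∩ Φ := by
    rintro u hu
    rw [hSD, Finset.coe_image] at hu
    obtain ⟨a, ha, rfl⟩ := hu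
    exact ⟨hnbrD a ha, hDA a ha⟩
  have hsubM : Marm ⊆ nbrSet (LAdj n k) v ∩ Φ := by
    rintro u ⟨huA, a, ha1, ha2, rfl⟩
    refine ⟨⟨σ*a, τ, hσa_abs a (by omega), hτ, rfl⟩, subset_majFinal _ _ _ huA⟩
  -- disjointness
  have hdisLD : Disjoint SL SD := by
    rw [Set.disjoint_left]
    rintro u hu hu'
    rw [hSL, Finset.coe_image] at hu
    rw [hSD, Finset.coe_image] at hu'
    obtain ⟨a, ha, rfl⟩ := hu
    obtain ⟨a', ha', heq⟩ := hu'
    have := congrArg Prod.snd (add_left_cancel heq)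
    exact hτne this.symm
  have hdisLM : Disjoint SL Marm := by
    rw [Set.disjoint_left]
    rintro u hu ⟨huA, a', ha1, ha2, heq⟩
    rw [hSL, Finset.coe_image] at hu
    obtain ⟨a, ha, rfl⟩ := hu
    have h1 : a = a' := hcancel a a' (hLD a ha) (by omega)
      (congrArg Prod.fst (add_left_cancel heq))
    have := hL1 ha; rw [Finset.mem_Icc] at this; omega
  have hdisDM : Disjoint SD Marm := by
    rw [Set.disjoint_left]
    rintro u hu ⟨huA, a', ha1, ha2, heq⟩
    rw [hSD, Finset.coe_image] at hu
    obtain ⟨a, ha, rfl⟩ := hu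
    exact hτne (congrArg Prod.snd (add_left_cancel heq)).symm
  -- count
  set W : Set (Torus n) := (SL ∪ SD) ∪ Marm with hW
  have hWsub : W ⊆ nbrSet (LAdj n k) v ∩ Φ := by
    rintro u (h | h)
    · rcases h with h | h
      · exact hsubL h
      · exact hsubD h
    · exact hsubM h
  have hcard1 : SL.ncard = L.card := by
    rw [hSL, Set.ncard_coe_finset, Finset.card_image_of_injOn hinjL]
  have hcard2 : SD.ncard = D.card := by
    rw [hSD, Set.ncard_coe_finset, Finset.card_image_of_injOn hinjD]
  have hWcard : W.ncard = L.card + D.card + Marm.ncard := by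
    rw [hW, Set.ncard_union_eq (by
        exact Set.disjoint_union_left.mpr ⟨hdisLM, hdisDM⟩) (Set.toFinite _) (Set.toFinite _),
      Set.ncard_union_eq hdisLD (Set.toFinite _) (Set.toFinite _), hcard1, hcard2]
  have hfin : (nbrSet (LAdj n k) v ∩ Φ).Finite := Set.toFinite _
  have hle : W.ncard ≤ (nbrSet (LAdj n k) v ∩ Φ).ncard := Set.ncard_le_ncard hWsub hfin
  refine majFinal_closed (LAdj n k) r A v ?_
  rw [ncard_nbrSet hkn hk2 v]
  have : (2*cdiv k m : ℤ) ≤ (Marm.ncard : ℤ) := by exact_mod_cast harm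
  push_cast
  push_cast at hcard hle hWcard
  linarith [hWcard, hle, this, hcard]

def covS (n k m : ℕ) (r : ℤ) (A : Set (Torus n)) (a b : ℕ) (w : Torus n) : Prop :=
  ∀ p ∈ Scloud k m a b, w + proj n p ∈ majFinal (LAdj n k) r A

lemma mem_Scloud {k m a b : ℕ} {p : ℤ × ℤ} :
    p ∈ Scloud k m a b ↔ p.2.natAbs ≤ m + a + 1 ∧ p.1.natAbs ≤ xseq k m a b p.2.natAbs :=
  Iff.rfl

lemma widen_point {n k m : ℕ} {r : ℤ} {A : Set (Torus n)} (hkn : 2*k+1 ≤ n)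
    (hm : 1 ≤ m) (hmk : m < k) (hr : r ≤ (cdiv k m : ℤ)) {a b : ℕ} {w : Torus n}
    (hcov : covS n k m r A a b w) (X j : ℤ) (hj : j.natAbs ≤ m+a+1)
    (hX : X.natAbs = xseq k m a b j.natAbs + 1)
    (hgood : MGood n k m A (w + proj n (X,j)) ∨ w + proj n (X,j) ∈ A) :
    w + proj n (X, j) ∈ majFinal (LAdj n k) r A := by
  have hk2 : 2 ≤ k := by omega
  have hc2 : 2 ≤ cdiv k m := cdiv_two hm hmk
  set c := cdiv k m with hcdef
  set i := j.natAbs with hidef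
  set x := xseq k m a b i with hxdef
  set σ : ℤ := if 0 ≤ X then 1 else -1 with hσdef
  set τ : ℤ := if 0 ≤ j then 1 else -1 with hτdef
  have hσ : σ = 1 ∨ σ = -1 := by rw [hσdef]; split <;> simp
  have hτ : τ = 1 ∨ τ = -1 := by rw [hτdef]; split <;> simp
  have hjτ : (0 ≤ j ∧ τ = 1) ∨ (j < 0 ∧ τ = -1) := by
    rcases le_or_gt 0 j with h | h
    · exact Or.inl ⟨h, by rw [hτdef, if_pos h]⟩
    · exact Or.inr ⟨h, by rw [hτdef, if_neg (by omega)]⟩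
  have hXσ : X = σ * ((x:ℤ) + 1) := by
    rcases le_or_gt 0 X with h | h
    · rw [hσdef, if_pos h, one_mul]; omega
    · rw [hσdef, if_neg (by omega), neg_one_mul]; omega
  have hXa : ∀ a' : ℤ, (X + σ*a').natAbs = ((x:ℤ)+1+a').natAbs := by
    intro a'
    have : X + σ*a' = σ * ((x:ℤ)+1+a') := by rw [hXσ]; ring
    rw [this, Int.natAbs_mul]
    rcases hσ with h | h <;> rw [h] <;> simp
  have hIp : (j + τ).natAbs = i + 1 := by rcases hjτ with ⟨h1, h2⟩ | ⟨h1, h2⟩ <;> omega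
  have hIminus : 1 ≤ i → (j - τ).natAbs = i - 1 := by
    intro h; rcases hjτ with ⟨h1, h2⟩ | ⟨h1, h2⟩ <;> omega
  have hIzero : i = 0 → (j - τ).natAbs = 1 := by
    intro h; rcases hjτ with ⟨h1, h2⟩ | ⟨h1, h2⟩ <;> omega
  set v := w + proj n (X, j) with hvdef
  have hvw : ∀ (a' yy : ℤ), (j+yy).natAbs ≤ m+a+1 →
      ((x:ℤ)+1+a').natAbs ≤ xseq k m a b (j+yy).natAbs →
      v + (((σ*a' : ℤ) : ZMod n), ((yy : ℤ) : ZMod n)) ∈ majFinal (LAdj n k) r A := by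
    intro a' yy h2 h1
    have heq : v + (((σ*a' : ℤ) : ZMod n), ((yy : ℤ) : ZMod n))
        = w + proj n (X + σ*a', j + yy) := by
      rw [hvdef, add_assoc]
      congr 1
      have : ((X + σ*a' : ℤ), (j + yy : ℤ)) = ((X, j) : ℤ × ℤ) + (σ*a', yy) := rfl
      rw [this, proj_add]
      rfl
    rw [heq]
    exact hcov _ ⟨h2, by simpa [hXa a'] using h1⟩
  have hxge : b + k ≤ x → (k:ℤ) ≤ (x:ℤ) := by intro h; omega
  rcases Nat.eq_zero_or_pos i with hi0 | hi1
  · -- i = 0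
    have hW : xseq k m a b 1 = x := by rw [hxdef, hi0]; exact (xseq_zero_one hm).symm
    have hxk : b + k ≤ x := by rw [hxdef, hi0, xseq_zero_one hm]; exact xseq_ge (k:=k) (m:=m) (a:=a) (b:=b) (i:=1) (by omega)
    refine act (m := m) hkn hk2 v σ τ hσ hτ (Finset.Icc (-(k:ℤ)) (-1)) (Finset.Icc (-(k:ℤ)) (-1))
      (Finset.Icc_subset_Icc le_rfl (by omega)) (Finset.Icc_subset_Icc le_rfl (by omega))
      ?_ ?_ ?_ hgood
    · intro a' ha'
      rw [Finset.mem_Icc] at ha'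
      have e1 : (j + τ).natAbs = 1 := by omega
      refine hvw a' τ (by omega) ?_
      rw [e1, hW]
      omega
    · intro a' ha'
      rw [Finset.mem_Icc] at ha'
      have e1 : (j + -τ).natAbs = 1 := by have := hIzero hi0; omega
      refine hvw a' (-τ) (by omega) ?_
      rw [e1, hW]
      omega
    · have e : (Finset.Icc (-(k:ℤ)) (-1)).card = k := by rw [Int.card_Icc]; omega
      rw [e]
      push_cast
      omega
  rcases Nat.lt_or_ge i m with him | him
  · -- 1 ≤ i ≤ m-1
    have hlow1 : xseq k m a b (i-1) = x + (i-1)*c := by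
      have h := xseq_step_low (k:=k) (m:=m) (a:=a) (b:=b) (i:=i-1) (by omega)
      rw [show i-1+1 = i by omega] at h
      rw [h, hxdef]
    have hlow2 : x = xseq k m a b (i+1) + i*c := by
      rw [hxdef]; exact xseq_step_low (k:=k) (m:=m) (a:=a) (b:=b) (i:=i) (by omega)
    have hxk : b + k ≤ x := by rw [hxdef]; exact xseq_ge (k:=k) (m:=m) (a:=a) (b:=b) (i:=i) (by omega)
    have hcast1 : (((i-1)*c : ℕ) : ℤ) = ((i:ℤ) - 1) * (c:ℤ) := by
      rw [Nat.cast_mul, Nat.cast_sub (by omega : 1 ≤ i)]; norm_num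
    have hcast2 : ((i*c : ℕ) : ℤ) = (i:ℤ) * (c:ℤ) := by push_cast; ring
    have hu : (c:ℤ) ≤ (i:ℤ) * (c:ℤ) := by
      have h1 : (1:ℤ) ≤ (i:ℤ) := by exact_mod_cast hi1
      nlinarith
    have hic : ((i:ℤ)-1)*(c:ℤ) = (i:ℤ)*(c:ℤ) - c := by ring
    have hicpos : (0:ℤ) ≤ (i:ℤ)*(c:ℤ) := by positivity
    refine act (m := m) hkn hk2 v σ τ hσ hτ
      (Finset.Icc (-(k:ℤ)) (-((i:ℤ)*(c:ℤ)) - 1))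
      (Finset.Icc (-(k:ℤ)) (min (k:ℤ) ((i:ℤ)*(c:ℤ) - c - 1)))
      (Finset.Icc_subset_Icc le_rfl (by omega))
      (Finset.Icc_subset_Icc le_rfl (by omega))
      ?_ ?_ ?_ hgood
    · intro a' ha'
      rw [Finset.mem_Icc] at ha'
      have e1 : (j + τ).natAbs = i + 1 := hIp
      refine hvw a' τ (by omega) ?_
      rw [e1]
      omega
    · intro a' ha'
      rw [Finset.mem_Icc] at ha'
      have e1 : (j + -τ).natAbs = i - 1 := by have := hIminus hi1; omega
      refine hvw a' (-τ) (by omega) ?_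
      rw [e1, hlow1]
      omega
    · rw [Int.card_Icc, Int.card_Icc]
      push_cast
      omega
  rcases Nat.eq_or_lt_of_le him with him2 | him2
  · -- i = m
    have hlow1 : xseq k m a b (i-1) = x + (i-1)*c := by
      have h := xseq_step_low (k:=k) (m:=m) (a:=a) (b:=b) (i:=i-1) (by omega)
      rw [show i-1+1 = i by omega] at h
      rw [h, hxdef]
    have hxk : b + k ≤ x := by rw [hxdef]; exact xseq_ge (k:=k) (m:=m) (a:=a) (b:=b) (i:=i) (by omega)
    have hcast1 : (((i-1)*c : ℕ) : ℤ) = ((i:ℤ) - 1) * (c:ℤ) := by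
      rw [Nat.cast_mul, Nat.cast_sub (by omega : 1 ≤ i)]; norm_num
    have hu : (k:ℤ) ≤ (i:ℤ) * (c:ℤ) := by
      have h := le_mul_cdiv (k := k) (m := m) hm
      rw [← hcdef, him2] at h
      have h2 : (k:ℤ) ≤ ((i * c : ℕ) : ℤ) := by exact_mod_cast h
      push_cast at h2
      linarith
    have hic : ((i:ℤ)-1)*(c:ℤ) = (i:ℤ)*(c:ℤ) - c := by ring
    refine act (m := m) hkn hk2 v σ τ hσ hτ ∅
      (Finset.Icc (-(k:ℤ)) (min (k:ℤ) ((i:ℤ)*(c:ℤ) - c - 1)))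
      (Finset.empty_subset _)
      (Finset.Icc_subset_Icc le_rfl (by omega))
      ?_ ?_ ?_ hgood
    · intro a' ha'; exact absurd ha' (Finset.notMem_empty _)
    · intro a' ha'
      rw [Finset.mem_Icc] at ha'
      have e1 : (j + -τ).natAbs = i - 1 := by have := hIminus hi1; omega
      refine hvw a' (-τ) (by omega) ?_
      rw [e1, hlow1]
      omega
    · rw [Finset.card_empty, Int.card_Icc]
      push_cast
      omega
  · -- m+1 ≤ i ≤ m+a+1
    have hhigh : xseq k m a b (i-1) = x + k := by
      have h := xseq_step_high (k:=k) (m:=m) (a:=a) (b:=b) (i:=i-1)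
        (by omega) (by omega)
      rw [show i-1+1 = i by omega] at h
      rw [h, hxdef]
    refine act (m := m) hkn hk2 v σ τ hσ hτ ∅ (Finset.Icc (-(k:ℤ)) ((k:ℤ) - 1))
      (Finset.empty_subset _)
      (Finset.Icc_subset_Icc le_rfl (by omega))
      ?_ ?_ ?_ hgood
    · intro a' ha'; exact absurd ha' (Finset.notMem_empty _)
    · intro a' ha'
      rw [Finset.mem_Icc] at ha'
      have e1 : (j + -τ).natAbs = i - 1 := by have := hIminus (by omega); omega
      refine hvw a' (-τ) (by omega) ?_
      rw [e1, hhigh]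
      omega
    · rw [Finset.card_empty, Int.card_Icc]
      push_cast
      omega

lemma heighten_point {n k m : ℕ} {r : ℤ} {A : Set (Torus n)} (hkn : 2*k+1 ≤ n)
    (hm : 1 ≤ m) (hmk : m < k) (hr : r ≤ (cdiv k m : ℤ)) {a b : ℕ} {w : Torus n}
    (hcov : covS n k m r A a (b+k) w) (X j : ℤ) (hj : j.natAbs = m+a+2)
    (hX : X.natAbs ≤ b)
    (hgood : MGood n k m A (w + proj n (X,j)) ∨ w + proj n (X,j) ∈ A) :
    w + proj n (X, j) ∈ majFinal (LAdj n k) r A := by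
  have hk2 : 2 ≤ k := by omega
  have hc2 : 2 ≤ cdiv k m := cdiv_two hm hmk
  set τ : ℤ := if 0 ≤ j then 1 else -1 with hτdef
  have hτ : τ = 1 ∨ τ = -1 := by rw [hτdef]; split <;> simp
  have hjτ : (0 ≤ j ∧ τ = 1) ∨ (j < 0 ∧ τ = -1) := by
    rcases le_or_gt 0 j with h | h
    · exact Or.inl ⟨h, by rw [hτdef, if_pos h]⟩
    · exact Or.inr ⟨h, by rw [hτdef, if_neg (by omega)]⟩
  have hIm : (j + -τ).natAbs = m + a + 1 := by
    rcases hjτ with ⟨h1, h2⟩ | ⟨h1, h2⟩ <;> omega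
  set v := w + proj n (X, j) with hvdef
  have hvw : ∀ (a' yy : ℤ), (j+yy).natAbs ≤ m+a+1 →
      (X+a').natAbs ≤ xseq k m a (b+k) (j+yy).natAbs →
      v + ((((1:ℤ)*a' : ℤ) : ZMod n), ((yy : ℤ) : ZMod n)) ∈ majFinal (LAdj n k) r A := by
    intro a' yy h2 h1
    have heq : v + ((((1:ℤ)*a' : ℤ) : ZMod n), ((yy : ℤ) : ZMod n))
        = w + proj n (X + a', j + yy) := by
      rw [hvdef, add_assoc, one_mul]
      congr 1
      have : ((X + a' : ℤ), (j + yy : ℤ)) = ((X, j) : ℤ × ℤ) + (a', yy) := rfl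
      rw [this, proj_add]
      rfl
    rw [heq]
    exact hcov _ ⟨h2, h1⟩
  refine act (m := m) hkn hk2 v 1 τ (Or.inl rfl) hτ ∅ (Finset.Icc (-(k:ℤ)) k)
    (Finset.empty_subset _) subset_rfl
    (fun a' ha' => absurd ha' (Finset.notMem_empty _)) ?_ ?_ hgood
  · intro a' ha'
    rw [Finset.mem_Icc] at ha'
    refine hvw a' (-τ) (by omega) ?_
    rw [hIm, xseq_tip]
    omega
  · rw [Finset.card_empty, Int.card_Icc]
    push_cast
    omega

lemma xseq_b_add (k m a b i : ℕ) : xseq k m a b i = b + xseq k m a 0 i := by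
  unfold xseq; split <;> omega

/-- The goodness box around a centre `w`. -/
def GB (n k m : ℕ) (A : Set (Torus n)) (w : Torus n) : Prop :=
  ∀ p : ℤ × ℤ, p.1.natAbs ≤ xseq k m 1 (m+k) 0 → p.2.natAbs ≤ m+3 →
    (MGood n k m A (w + proj n p) ∨ w + proj n p ∈ A)

lemma widen_step {n k m : ℕ} {r : ℤ} {A : Set (Torus n)} (hkn : 2*k+1 ≤ n)
    (hm : 1 ≤ m) (hmk : m < k) (hr : r ≤ (cdiv k m : ℤ)) {b : ℕ} {w : Torus n}
    (hb : b < m+2*k) (hgb : GB n k m A w) (hcov : covS n k m r A 0 b w) :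
    covS n k m r A 0 (b+1) w := by
  rintro ⟨X, j⟩ hp
  rw [mem_Scloud] at hp
  obtain ⟨h1, h2⟩ := hp
  replace h1 : j.natAbs ≤ m+0+1 := h1
  replace h2 : X.natAbs ≤ xseq k m 0 (b+1) j.natAbs := h2
  rw [xseq_succ_b] at h2
  rcases Nat.lt_or_ge X.natAbs (xseq k m 0 b j.natAbs + 1) with h3 | h3
  · exact hcov (X, j) ⟨h1, (by omega : X.natAbs ≤ xseq k m 0 b j.natAbs)⟩
  · have h4 : X.natAbs = xseq k m 0 b j.natAbs + 1 := by omega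
    refine widen_point hkn hm hmk hr hcov X j h1 h4 ?_
    refine hgb (X, j) ?_ (show j.natAbs ≤ m+3 by omega)
    show X.natAbs ≤ xseq k m 1 (m+k) 0
    have e1 : xseq k m 0 b j.natAbs ≤ xseq k m 0 b 0 := xseq_anti (Nat.zero_le _)
    have e3 : xseq k m 0 (b+1) 0 ≤ xseq k m 0 (m+2*k) 0 := xseq_mono_b _ _ _ _ (by omega)
    have e4 : xseq k m 1 (m+k) 0 = xseq k m 0 (m+2*k) 0 := by
      have h := xseq_a_shift (k:=k) (m:=m) (a:=0) (b:=m+k) (i:=0) (by omega)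
      rw [show m+k+k = m+2*k from by omega] at h
      exact h
    have e5 : xseq k m 0 (b+1) 0 = xseq k m 0 b 0 + 1 := xseq_succ_b _ _ _ _ _
    omega

lemma widen_chain {n k m : ℕ} {r : ℤ} {A : Set (Torus n)} (hkn : 2*k+1 ≤ n)
    (hm : 1 ≤ m) (hmk : m < k) (hr : r ≤ (cdiv k m : ℤ)) {w : Torus n}
    (hgb : GB n k m A w) (hcov : covS n k m r A 0 0 w) :
    covS n k m r A 0 (m+2*k) w := by
  suffices h : ∀ t, t ≤ m+2*k → covS n k m r A 0 t w by exact h _ le_rfl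
  intro t
  induction t with
  | zero => intro _; exact hcov
  | succ t ih => intro ht; exact widen_step hkn hm hmk hr (by omega) hgb (ih (by omega))

lemma heighten_step {n k m : ℕ} {r : ℤ} {A : Set (Torus n)} (hkn : 2*k+1 ≤ n)
    (hm : 1 ≤ m) (hmk : m < k) (hr : r ≤ (cdiv k m : ℤ)) {w : Torus n}
    (hgb : GB n k m A w) (hcov : covS n k m r A 0 (m+2*k) w) :
    covS n k m r A 1 (m+k) w := by
  have hcov' : covS n k m r A 0 (m+k+k) w := by
    rw [show m+k+k = m+2*k from by omega]
    exact hcov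
  rintro ⟨X, j⟩ hp
  rw [mem_Scloud] at hp
  obtain ⟨h1, h2⟩ := hp
  replace h1 : j.natAbs ≤ m+1+1 := h1
  replace h2 : X.natAbs ≤ xseq k m 1 (m+k) j.natAbs := h2
  rcases Nat.lt_or_ge j.natAbs (m+2) with h3 | h3
  · -- inner rows: identical to the cloud S(0, m+2k)
    have e : xseq k m 1 (m+k) j.natAbs = xseq k m 0 (m+k+k) j.natAbs :=
      xseq_a_shift (by omega)
    exact hcov' (X, j) ⟨(by omega : j.natAbs ≤ m+0+1),
      (by omega : X.natAbs ≤ xseq k m 0 (m+k+k) j.natAbs)⟩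
  · -- new tip rows
    have h4 : j.natAbs = m+0+2 := by omega
    have e : xseq k m 1 (m+k) j.natAbs = m+k := by
      rw [show j.natAbs = m+1+1 from by omega, xseq_tip]
    refine heighten_point hkn hm hmk hr hcov' X j h4 (by omega) ?_
    refine hgb (X, j) ?_ (show j.natAbs ≤ m+3 by omega)
    show X.natAbs ≤ xseq k m 1 (m+k) 0
    have e6 : m+k+k ≤ xseq k m 1 (m+k) 0 := xseq_ge (k:=k) (m:=m) (a:=1) (b:=m+k) (by omega)
    omega

lemma key_ineq {k m : ℕ} (hm : 1 ≤ m) (hmk : m < k) (i i' : ℕ) (h1 : i ≤ m+1)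
    (h2 : i' ≤ i+1) : xseq k m 0 0 i + 1 ≤ xseq k m 1 (m+k) i' := by
  have hc2 : 2 ≤ cdiv k m := cdiv_two hm hmk
  rcases Nat.lt_or_ge i' (m+2) with hi' | hi'
  · have ha : xseq k m 1 (m+k) i' = xseq k m 0 (m+2*k) i' := by
      have h := xseq_a_shift (k:=k) (m:=m) (a:=0) (b:=m+k) (i:=i') (by omega)
      rw [show m+k+k = m+2*k from by omega] at h
      exact h
    rw [ha, xseq_b_add k m 0 (m+2*k) i']
    have hanti : xseq k m 0 0 (i+1) ≤ xseq k m 0 0 i' := xseq_anti h2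
    rcases Nat.lt_or_ge i m with h4 | h4
    · have hstep : xseq k m 0 0 i = xseq k m 0 0 (i+1) + i * cdiv k m :=
        xseq_step_low h4
      have hmc : m * cdiv k m ≤ k + m - 1 := mul_cdiv_le hm (by omega)
      have hic : i * cdiv k m ≤ (m-1) * cdiv k m :=
        Nat.mul_le_mul_right _ (by omega)
      have he : (m-1) * cdiv k m + cdiv k m = m * cdiv k m := by
        rw [← Nat.succ_mul, Nat.succ_eq_add_one, show m-1+1 = m from by omega]
      omega
    · have hle : xseq k m 0 0 i ≤ xseq k m 0 0 m := xseq_anti h4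
      have hm0 : xseq k m 0 0 m = k := by
        rw [xseq, if_pos le_rfl]
        have e : m + 0 + 1 - m = 1 := by omega
        rw [e]
        omega
      omega
  · have hi2 : i' = m+2 ∧ i = m+1 := by omega
    have hL : xseq k m 0 0 i = 0 := by
      rw [hi2.2, show m+1 = m+0+1 from by omega, xseq_tip]
    have hR : xseq k m 1 (m+k) i' = m+k := by
      rw [hi2.1, show m+2 = m+1+1 from by omega, xseq_tip]
    omega

lemma box_bound {k m : ℕ} (hm : 1 ≤ m) (hmk : m < k) :
    xseq k m 1 (m+k) 0 + (m+3) ≤ 32*m*k^2 := by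
  have hk2 : 2 ≤ k := by omega
  have hsum : ∑ j ∈ Finset.Ico 0 m, j ≤ m*m := by
    calc ∑ j ∈ Finset.Ico 0 m, j ≤ ∑ _j ∈ Finset.Ico 0 m, m :=
          Finset.sum_le_sum (fun j hj => le_of_lt (Finset.mem_Ico.mp hj).2)
      _ = m*m := by rw [Finset.sum_const, Nat.card_Ico, smul_eq_mul, Nat.sub_zero]
  have hmc : m * cdiv k m ≤ k + m - 1 := mul_cdiv_le hm (by omega)
  have hval : xseq k m 1 (m+k) 0 = (m+k) + (1+1)*k + cdiv k m * ∑ j ∈ Finset.Ico 0 m, j := by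
    rw [xseq, if_neg (by omega)]
  have hcs : cdiv k m * ∑ j ∈ Finset.Ico 0 m, j ≤ 2*k*m := by
    calc cdiv k m * ∑ j ∈ Finset.Ico 0 m, j ≤ cdiv k m * (m*m) :=
          Nat.mul_le_mul_left _ hsum
      _ = (m * cdiv k m) * m := by ring
      _ ≤ (k+m-1) * m := Nat.mul_le_mul_right _ hmc
      _ ≤ 2*k*m := Nat.mul_le_mul_right _ (by omega)
  have hfin : (m+k) + (1+1)*k + 2*k*m + (m+3) ≤ 32*m*k^2 := by
    have hkk : 4 ≤ k^2 := by nlinarith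
    have e1 : m ≤ m*k^2 := Nat.le_mul_of_pos_right _ (by omega)
    have e2 : k ≤ m*k^2 := by
      calc k ≤ k*k := Nat.le_mul_of_pos_left _ (by omega)
        _ ≤ m*(k*k) := Nat.le_mul_of_pos_left _ (by omega)
        _ = m*k^2 := by ring
    have e3 : k*m ≤ m*k^2 := by
      calc k*m = m*k := by ring
        _ ≤ m*k*k := Nat.le_mul_of_pos_right _ (by omega)
        _ = m*k^2 := by ring
    have e4 : 1 ≤ m*k^2 := by nlinarith
    have e5 : 2*k*m = 2*(k*m) := by ring
    have e6 : 32*m*k^2 = 32*(m*k^2) := by ring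
    omega
  omega

lemma cov_shift {n k m : ℕ} {r : ℤ} {A : Set (Torus n)} (hm : 1 ≤ m) (hmk : m < k)
    {w : Torus n} (hcov : covS n k m r A 1 (m+k) w) (dx dy : ℤ)
    (hd : dx.natAbs + dy.natAbs ≤ 1) :
    covS n k m r A 0 0 (w + proj n (dx, dy)) := by
  rintro ⟨X, j⟩ hp
  rw [mem_Scloud] at hp
  obtain ⟨h1, h2⟩ := hp
  replace h1 : j.natAbs ≤ m+0+1 := h1
  replace h2 : X.natAbs ≤ xseq k m 0 0 j.natAbs := h2
  have heq : w + proj n (dx, dy) + proj n (X, j) = w + proj n (X + dx, j + dy) := by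
    rw [add_assoc, ← proj_add]
    congr 2
    simp only [Prod.mk_add_mk, Prod.mk.injEq]
    constructor <;> ring
  rw [heq]
  refine hcov (X + dx, j + dy) ⟨(show (j+dy).natAbs ≤ m+1+1 by omega), ?_⟩
  show (X + dx).natAbs ≤ xseq k m 1 (m+k) (j+dy).natAbs
  have hkey := key_ineq hm hmk j.natAbs (j+dy).natAbs (by omega) (by omega)
  omega

lemma stepsLe_self {V : Type*} (Adj : V → V → Prop) (d : ℕ) (u : V) :
    stepsLe Adj d u u := by
  induction d with
  | zero => rfl
  | succ d ih => exact Or.inl ih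

lemma l1_step_y {n : ℕ} (u' : Torus n) (s : ℤ) (hs : s = 1 ∨ s = -1) :
    l1Adj n u' (u' + ((0 : ZMod n), ((s:ℤ) : ZMod n))) := by
  left
  constructor
  · show u'.1 = u'.1 + 0
    rw [add_zero]
  · rcases hs with h | h <;> subst h
    · left; show u'.2 + ((1:ℤ):ZMod n) = u'.2 + 1; norm_num
    · right; show u'.2 + ((-1:ℤ):ZMod n) = u'.2 - 1; push_cast; ring

lemma l1_step_x {n : ℕ} (u' : Torus n) (s : ℤ) (hs : s = 1 ∨ s = -1) :
    l1Adj n u' (u' + (((s:ℤ) : ZMod n), (0 : ZMod n))) := by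
  right
  constructor
  · show u'.2 = u'.2 + 0
    rw [add_zero]
  · rcases hs with h | h <;> subst h
    · left; show u'.1 + ((1:ℤ):ZMod n) = u'.1 + 1; norm_num
    · right; show u'.1 + ((-1:ℤ):ZMod n) = u'.1 - 1; push_cast; ring

lemma steps_offset {n : ℕ} : ∀ (d : ℕ) (u : Torus n) (q : ℤ × ℤ),
    q.1.natAbs + q.2.natAbs ≤ d → stepsLe (l1Adj n) d u (u + proj n q) := by
  intro d
  induction d with
  | zero =>
    rintro u ⟨qx, qy⟩ h
    have hx : qx = 0 := by omega
    have hy : qy = 0 := by omega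
    subst hx; subst hy
    rw [proj_zero, add_zero]
    rfl
  | succ d ih =>
    rintro u ⟨qx, qy⟩ h
    rcases eq_or_ne qy 0 with h2 | h2
    · rcases eq_or_ne qx 0 with h1 | h1
      · subst h1; subst h2
        rw [proj_zero, add_zero]
        exact stepsLe_self _ _ _
      · -- move in x
        set s : ℤ := if 0 ≤ qx then 1 else -1 with hsdef
        have hs : s = 1 ∨ s = -1 := by rw [hsdef]; split <;> simp
        have e : u + proj n (qx, qy) = (u + proj n (qx - s, qy)) + (((s:ℤ) : ZMod n), (0 : ZMod n)) := by
          rw [add_assoc]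
          congr 1
          show proj n (qx, qy) = proj n (qx - s, qy) + (((s:ℤ) : ZMod n), (0 : ZMod n))
          simp only [proj, Prod.mk_add_mk, Prod.mk.injEq]
          constructor
          · push_cast; ring
          · rw [add_zero]
        rw [e]
        refine Or.inr ⟨u + proj n (qx - s, qy), ih u (qx - s, qy) ?_, l1_step_x _ s hs⟩
        have : (qx - s).natAbs = qx.natAbs - 1 := by
          rcases le_or_gt 0 qx with h3 | h3
          · rw [hsdef, if_pos h3]; omega
          · rw [hsdef, if_neg (by omega)]; omega
        simp only at h ⊢
        omega
    · -- move in y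
      set s : ℤ := if 0 ≤ qy then 1 else -1 with hsdef
      have hs : s = 1 ∨ s = -1 := by rw [hsdef]; split <;> simp
      have e : u + proj n (qx, qy) = (u + proj n (qx, qy - s)) + ((0 : ZMod n), ((s:ℤ) : ZMod n)) := by
        rw [add_assoc]
        congr 1
        show proj n (qx, qy) = proj n (qx, qy - s) + ((0 : ZMod n), ((s:ℤ) : ZMod n))
        simp only [proj, Prod.mk_add_mk, Prod.mk.injEq]
        constructor
        · rw [add_zero]
        · push_cast; ring
      rw [e]
      refine Or.inr ⟨u + proj n (qx, qy - s), ih u (qx, qy - s) ?_, l1_step_y _ s hs⟩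
      have : (qy - s).natAbs = qy.natAbs - 1 := by
        rcases le_or_gt 0 qy with h3 | h3
        · rw [hsdef, if_pos h3]; omega
        · rw [hsdef, if_neg (by omega)]; omega
      simp only at h ⊢
      omega

end MajAux

/-- Lemma 2.2 of the paper. If `U` is `ℓ₁`-connected, all vertices within
`ℓ₁`-distance `32mk²` of `U` are `m`-good or active, and `U` contains an active translate of
`S^k_m(0,0)`, then `U` eventually becomes active in the `r`-majority bootstrap percolation
process on `L(n,k)`. -/
theorem statement_4 (n k m : ℕ) (r : ℤ) (hm1 : 1 ≤ m) (hmk : m < k)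
    (hr : r ≤ (cdiv k m : ℤ)) (hkn : 2 * k + 1 ≤ n)
    (A U : Set (Torus n))
    (hconn : ConnIn (l1Adj n) U)
    (hgood : ∀ w : Torus n, (∃ u ∈ U, stepsLe (l1Adj n) (32 * m * k ^ 2) u w) →
      MGood n k m A w ∨ w ∈ A)
    (hseed : ∃ c : Torus n,
      (∀ p ∈ Scloud k m 0 0, c + proj n p ∈ A) ∧
      (∀ p ∈ Scloud k m 0 0, c + proj n p ∈ U)) :
    U ⊆ majFinal (LAdj n k) r A := by
  intro u huU
  obtain ⟨c₀, hA, hU⟩ := hseed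
  have hk2 : 2 ≤ k := by omega
  haveI : NeZero n := ⟨by omega⟩
  have h00 : ((0,0) : ℤ×ℤ) ∈ Scloud k m 0 0 := ⟨by simp, by simp⟩
  have hc₀U : c₀ ∈ U := by
    have h := hU _ h00
    rwa [MajAux.proj_zero, add_zero] at h
  have hGB : ∀ x ∈ U, MajAux.GB n k m A x := by
    intro x hx p hp1 hp2
    refine hgood _ ⟨x, hx, ?_⟩
    refine MajAux.steps_offset _ _ _ ?_
    have hbox := MajAux.box_bound (k:=k) (m:=m) hm1 hmk
    omega
  have main : ∀ y, Relation.ReflTransGen (fun a b => a ∈ U ∧ b ∈ U ∧ l1Adj n a b) c₀ y →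
      MajAux.covS n k m r A 0 0 y := by
    intro y hy
    induction hy with
    | refl => intro p hp; exact MajAux.subset_majFinal _ _ _ (hA p hp)
    | @tail b c h1 h2 ih =>
      obtain ⟨hbU, hcU, hadj⟩ := h2
      have hgb := hGB _ hbU
      have hstep1 := MajAux.widen_chain hkn hm1 hmk hr hgb ih
      have hstep2 := MajAux.heighten_step hkn hm1 hmk hr hgb hstep1
      rcases hadj with ⟨hfst, hsnd⟩ | ⟨hsnd, hfst⟩
      · rcases hsnd with h | h
        · have e : c = b + proj n (0, 1) := by
            refine Prod.ext_iff.mpr ⟨?_, ?_⟩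
            · show c.1 = b.1 + ((0:ℤ) : ZMod n)
              rw [hfst]; norm_num
            · show c.2 = b.2 + ((1:ℤ) : ZMod n)
              rw [h]; norm_num
          rw [e]
          exact MajAux.cov_shift hm1 hmk hstep2 0 1 (by norm_num)
        · have e : c = b + proj n (0, -1) := by
            refine Prod.ext_iff.mpr ⟨?_, ?_⟩
            · show c.1 = b.1 + ((0:ℤ) : ZMod n)
              rw [hfst]; norm_num
            · show c.2 = b.2 + ((-1:ℤ) : ZMod n)
              rw [h]; push_cast; ring
          rw [e]
          exact MajAux.cov_shift hm1 hmk hstep2 0 (-1) (by norm_num)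
      · rcases hfst with h | h
        · have e : c = b + proj n (1, 0) := by
            refine Prod.ext_iff.mpr ⟨?_, ?_⟩
            · show c.1 = b.1 + ((1:ℤ) : ZMod n)
              rw [h]; norm_num
            · show c.2 = b.2 + ((0:ℤ) : ZMod n)
              rw [← hsnd]; norm_num
          rw [e]
          exact MajAux.cov_shift hm1 hmk hstep2 1 0 (by norm_num)
        · have e : c = b + proj n (-1, 0) := by
            refine Prod.ext_iff.mpr ⟨?_, ?_⟩
            · show c.1 = b.1 + ((-1:ℤ) : ZMod n)
              rw [h]; push_cast; ring
            · show c.2 = b.2 + ((0:ℤ) : ZMod n)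
              rw [← hsnd]; norm_num
          rw [e]
          exact MajAux.cov_shift hm1 hmk hstep2 (-1) 0 (by norm_num)
  have hcov := main u (hconn c₀ hc₀U u huU)
  have h := hcov (0,0) h00
  rwa [MajAux.proj_zero, add_zero] at h
end

section
/- Let k, m, r, t be integers with 1 ≤ m < k, r ≤ ⌈k/m⌉ and 1 ≤ t ≤ n. If Z is an ℓ₁-connected set of cells of the t-tessellation T(n,t) such that every cell of Z is m-good and Z contains a seed, then in the r-majority bootstrap percolation process on L(n,k), eventually every vertex of every cell of Z becomes active. -/
open Finset Filter

open Maj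


/-! ### Auxiliary development for statement_5 -/

namespace Maj5

open Maj

section Closure

set_option linter.unusedSectionVars false

variable {V : Type*} [Finite V]

lemma majStep_subset (Adj : V → V → Prop) (r : ℤ) (A : Set V) : A ⊆ majStep Adj r A :=
  Set.subset_union_left

lemma majStep_mono (Adj : V → V → Prop) (r : ℤ) {A B : Set V} (h : A ⊆ B) :
    majStep Adj r A ⊆ majStep Adj r B := by
  intro v hv
  rcases hv with hv | hv
  · exact Or.inl (h hv)
  · right
    have h2 : (nbrSet Adj v ∩ A).ncard ≤ (nbrSet Adj v ∩ B).ncard :=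
      Set.ncard_le_ncard (Set.inter_subset_inter_right _ h) (Set.toFinite _)
    have h3 := (Int.ofNat_le.mpr h2)
    simp only [Set.mem_setOf_eq] at hv ⊢
    omega

lemma iterate_mono (Adj : V → V → Prop) (r : ℤ) (A : Set V) {s u : ℕ} (h : s ≤ u) :
    (majStep Adj r)^[s] A ⊆ (majStep Adj r)^[u] A := by
  induction u with
  | zero => simp_all
  | succ u ih =>
    rcases Nat.eq_or_lt_of_le h with h' | h'
    · subst h'; rfl
    · refine (ih (Nat.lt_succ_iff.mp h')).trans ?_
      rw [Function.iterate_succ_apply']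
      exact majStep_subset _ _ _

lemma subset_majFinal (Adj : V → V → Prop) (r : ℤ) (A : Set V) : A ⊆ majFinal Adj r A :=
  Set.subset_iUnion (fun s : ℕ => (majStep Adj r)^[s] A) 0

lemma exists_stage (Adj : V → V → Prop) (r : ℤ) (A : Set V) {F : Set V}
    (hF : F ⊆ majFinal Adj r A) : ∃ s, F ⊆ (majStep Adj r)^[s] A := by
  refine Set.Finite.induction_on
    (motive := fun F _ => F ⊆ majFinal Adj r A → ∃ s, F ⊆ (majStep Adj r)^[s] A)
    F (Set.toFinite F) (fun _ => ⟨0, by simp⟩) ?_ hF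
  intro a F' _ _ ih hF2
  obtain ⟨s₁, hs₁⟩ := ih (fun x hx => hF2 (Set.mem_insert_of_mem _ hx))
  have haM : a ∈ majFinal Adj r A := hF2 (Set.mem_insert _ _)
  obtain ⟨S, ⟨s₂, rfl⟩, hs₂⟩ := haM
  exact ⟨max s₂ s₁, Set.insert_subset
    (iterate_mono Adj r A (le_max_left _ _) hs₂)
    (hs₁.trans (iterate_mono Adj r A (le_max_right _ _)))⟩

lemma majFinal_closed (Adj : V → V → Prop) (r : ℤ) (A : Set V) (v : V)
    (h : ((nbrSet Adj v).ncard : ℤ) + r ≤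
      2 * ((nbrSet Adj v ∩ majFinal Adj r A).ncard : ℤ)) :
    v ∈ majFinal Adj r A := by
  obtain ⟨s, hs⟩ := exists_stage Adj r A (Set.inter_subset_right :
    nbrSet Adj v ∩ majFinal Adj r A ⊆ majFinal Adj r A)
  have hsub : nbrSet Adj v ∩ majFinal Adj r A ⊆ nbrSet Adj v ∩ (majStep Adj r)^[s] A :=
    Set.subset_inter Set.inter_subset_left hs
  have hcard : (nbrSet Adj v ∩ majFinal Adj r A).ncard ≤
      (nbrSet Adj v ∩ (majStep Adj r)^[s] A).ncard :=
    Set.ncard_le_ncard hsub (Set.toFinite _)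
  have hv : v ∈ majStep Adj r ((majStep Adj r)^[s] A) := by
    refine Or.inr ?_
    show ((nbrSet Adj v).ncard : ℤ) + r ≤
      2 * ((nbrSet Adj v ∩ (majStep Adj r)^[s] A).ncard : ℤ)
    have := (Int.ofNat_le.mpr hcard)
    omega
  rw [← Function.iterate_succ_apply' (majStep Adj r) s A] at hv
  exact Set.mem_iUnion.mpr ⟨s + 1, hv⟩

end Closure


section TorusTools

variable {n k : ℕ}

lemma proj_add (n : ℕ) (p q : ℤ × ℤ) : proj n (p + q) = proj n p + proj n q := by
  apply Prod.ext <;> simp [proj]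

lemma cast_inj {a b : ℤ} (h : (a : ZMod n) = b) (hlt : (b - a).natAbs < n) : a = b := by
  rw [ZMod.intCast_eq_intCast_iff_dvd_sub] at h
  obtain ⟨c, hc⟩ := h
  have h2 : (b - a).natAbs = n * c.natAbs := by rw [hc, Int.natAbs_mul, Int.natAbs_natCast]
  have hc0 : c.natAbs = 0 := by
    by_contra h0
    have : n ≤ n * c.natAbs := Nat.le_mul_of_pos_right n (by omega)
    omega
  have : c = 0 := Int.natAbs_eq_zero.mp hc0
  subst this
  omega

lemma proj_inj {p q : ℤ × ℤ} (h : proj n p = proj n q)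
    (h1 : (q.1 - p.1).natAbs < n) (h2 : (q.2 - p.2).natAbs < n) : p = q := by
  have h1' := congrArg Prod.fst h
  have h2' := congrArg Prod.snd h
  simp only [proj] at h1' h2'
  exact Prod.ext (cast_inj h1' h1) (cast_inj h2' h2)

lemma mem_nbr (v : Torus n) (p : ℤ × ℤ) (h1 : p.1.natAbs ≤ k) (h2 : p.2 = 1 ∨ p.2 = -1) :
    v + proj n p ∈ nbrSet (LAdj n k) v :=
  ⟨p.1, p.2, h1, h2, by cases p; rfl⟩

lemma nbr_eq (k : ℕ) (v : Torus n) :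
    nbrSet (LAdj n k) v =
      (fun p : ℤ × ℤ => v + proj n p) ''
        ↑((Finset.Icc (-(k:ℤ)) k) ×ˢ ({1, -1} : Finset ℤ)) := by
  ext u
  constructor
  · rintro ⟨a, b, ha, hb, rfl⟩
    refine ⟨(a, b), ?_, rfl⟩
    simp only [Finset.coe_product, Set.mem_prod, Finset.mem_coe, Finset.mem_Icc,
      Finset.mem_insert, Finset.mem_singleton]
    exact ⟨by omega, by simpa using hb⟩
  · rintro ⟨p, hp, rfl⟩
    simp only [Finset.coe_product, Set.mem_prod, Finset.mem_coe, Finset.mem_Icc,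
      Finset.mem_insert, Finset.mem_singleton] at hp
    exact mem_nbr v p (by omega) (by simpa using hp.2)

lemma nbr_ncard (hk : 1 ≤ k) (hkn : 2*k+1 ≤ n) (v : Torus n) :
    (nbrSet (LAdj n k) v).ncard = 4*k+2 := by
  rw [nbr_eq k v, Set.ncard_image_of_injOn, Set.ncard_coe_finset, Finset.card_product,
    Int.card_Icc]
  · have : ({1, -1} : Finset ℤ).card = 2 := by decide
    rw [this]
    omega
  · intro p hp q hq hpq
    simp only [Finset.coe_product, Set.mem_prod, Finset.mem_coe, Finset.mem_Icc,
      Finset.mem_insert, Finset.mem_singleton] at hp hq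
    have h := add_left_cancel hpq
    refine proj_inj h ?_ ?_
    · omega
    · rcases hp.2 with h1 | h1 <;> rcases hq.2 with h2 | h2 <;> rw [h1, h2] <;> omega

lemma row_ne (hkn : 2*k+1 ≤ n) (hk : 1 ≤ k) {sy : ℤ} (hsy : sy = 1 ∨ sy = -1)
    (v : Torus n) (x y : ℤ) :
    v + proj n (x, sy) ≠ v + proj n (y, -sy) := by
  intro h
  have h2 := congrArg Prod.snd (add_left_cancel h)
  simp only [proj] at h2
  have := cast_inj h2 (by rcases hsy with h | h <;> rw [h] <;> omega)
  omega

lemma offset_inj (hkn : 2*k+1 ≤ n) {sx : ℤ} (hsx : sx = 1 ∨ sx = -1)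
    (v : Torus n) {s a a' : ℤ} (ha : a.natAbs ≤ k) (ha' : a'.natAbs ≤ k)
    (h : v + proj n (sx * a, s) = v + proj n (sx * a', s)) : a = a' := by
  have h1 := congrArg Prod.fst (add_left_cancel h)
  simp only [proj] at h1
  have h2 := cast_inj h1 (by
    have : (sx * a' - sx * a).natAbs = (a' - a).natAbs := by
      rcases hsx with h | h <;> rw [h] <;> [skip; rw [show (-1) * a' - (-1) * a = -(a' - a) by ring, Int.natAbs_neg]] <;> simp
    omega)
  rcases hsx with h | h <;> rw [h] at h2 <;> omega

lemma step_lemma {n k m : ℕ} (hk : 1 ≤ k) (hkn : 2*k+1 ≤ n) (r : ℤ) (A : Set (Torus n))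
    (v : Torus n) (sx sy : ℤ) (hsx : sx = 1 ∨ sx = -1) (hsy : sy = 1 ∨ sy = -1)
    (e₁ e₂ : ℤ) (he₁ : e₁ ≤ k) (he₂ : e₂ ≤ 0)
    (h1 : ∀ a : ℤ, -(k:ℤ) ≤ a → a ≤ e₁ → v + proj n (sx * a, sy) ∈ majFinal (LAdj n k) r A)
    (h2 : ∀ a : ℤ, -(k:ℤ) ≤ a → a ≤ e₂ → v + proj n (sx * a, -sy) ∈ majFinal (LAdj n k) r A)
    (hg : MGood n k m A v)
    (harith : 4*(k:ℤ)+2+r ≤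
      2*(max 0 ((k:ℤ)+1+e₁) + max 0 ((k:ℤ)+1+e₂) + 2*(cdiv k m : ℤ))) :
    v ∈ majFinal (LAdj n k) r A := by
  haveI : NeZero n := ⟨by omega⟩
  set E := majFinal (LAdj n k) r A with hE
  set F₁ : Set (Torus n) := (fun a : ℤ => v + proj n (sx*a, sy)) '' ↑(Finset.Icc (-(k:ℤ)) e₁)
    with hF₁
  set F₂ : Set (Torus n) := (fun a : ℤ => v + proj n (sx*a, -sy)) '' ↑(Finset.Icc (-(k:ℤ)) e₂)
    with hF₂
  set G : Set (Torus n) := {u | u ∈ A ∧ ∃ α : ℤ, 1 ≤ α ∧ α ≤ (k:ℤ) ∧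
    u = v + (((sx * α : ℤ) : ZMod n), ((-sy : ℤ) : ZMod n))} with hG
  have hGcard : 2 * cdiv k m ≤ G.ncard := hg sx (-sy) hsx (by rcases hsy with h | h <;> simp [h])
  have hsub : F₁ ∪ F₂ ∪ G ⊆ nbrSet (LAdj n k) v ∩ E := by
    rintro u ((⟨a, ha, rfl⟩ | ⟨a, ha, rfl⟩) | ⟨huA, α, hα1, hα2, rfl⟩)
    · simp only [Finset.mem_coe, Finset.mem_Icc] at ha
      exact ⟨mem_nbr v _ (by simp; rcases hsx with h | h <;> rw [h] <;> omega) (by simpa using hsy),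
        h1 a ha.1 ha.2⟩
    · simp only [Finset.mem_coe, Finset.mem_Icc] at ha
      refine ⟨mem_nbr v _ (by simp; rcases hsx with h | h <;> rw [h] <;> omega) ?_, h2 a ha.1 ha.2⟩
      rcases hsy with h | h <;> simp [h]
    · refine ⟨mem_nbr v (sx*α, -sy) (by simp; rcases hsx with h | h <;> rw [h] <;> omega) ?_, subset_majFinal _ _ _ huA⟩
      rcases hsy with h | h <;> simp [h]
  have hd12 : Disjoint F₁ F₂ := by
    rw [Set.disjoint_left]
    rintro u ⟨a, ha, rfl⟩ ⟨a', ha', h⟩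
    exact row_ne hkn hk hsy v (sx*a) (sx*a') h.symm
  have hd1G : Disjoint F₁ G := by
    rw [Set.disjoint_left]
    rintro u ⟨a, ha, rfl⟩ ⟨huA, α, hα1, hα2, h⟩
    exact row_ne hkn hk hsy v (sx*a) (sx*α) h
  have hd2G : Disjoint F₂ G := by
    rw [Set.disjoint_left]
    rintro u ⟨a, ha, rfl⟩ ⟨huA, α, hα1, hα2, h⟩
    simp only [Finset.mem_coe, Finset.mem_Icc] at ha
    have : a = α := offset_inj hkn hsx v (by omega) (by omega) h
    omega
  have hcF₁ : F₁.ncard = ((e₁ + 1 + k).toNat) := by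
    rw [hF₁, Set.ncard_image_of_injOn, Set.ncard_coe_finset, Int.card_Icc]
    · congr 1; ring
    · intro a ha a' ha' h
      simp only [Finset.mem_coe, Finset.mem_Icc] at ha ha'
      exact offset_inj hkn hsx v (by omega) (by omega) h
  have hcF₂ : F₂.ncard = ((e₂ + 1 + k).toNat) := by
    rw [hF₂, Set.ncard_image_of_injOn, Set.ncard_coe_finset, Int.card_Icc]
    · congr 1; ring
    · intro a ha a' ha' h
      simp only [Finset.mem_coe, Finset.mem_Icc] at ha ha'
      exact offset_inj hkn hsx v (by omega) (by omega) h
  have hcard : (F₁ ∪ F₂ ∪ G).ncard = F₁.ncard + F₂.ncard + G.ncard := by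
    rw [Set.ncard_union_eq (by
        rw [Set.disjoint_union_left]; exact ⟨hd1G, hd2G⟩) (Set.toFinite _) (Set.toFinite _),
      Set.ncard_union_eq hd12 (Set.toFinite _) (Set.toFinite _)]
  have hle : (F₁ ∪ F₂ ∪ G).ncard ≤ (nbrSet (LAdj n k) v ∩ E).ncard :=
    Set.ncard_le_ncard hsub (Set.toFinite _)
  refine majFinal_closed (LAdj n k) r A v ?_
  rw [← hE, nbr_ncard hk hkn v]
  have e1 : ((e₁ + 1 + k).toNat : ℤ) = max 0 ((k:ℤ)+1+e₁) := by
    rw [Int.toNat_eq_max]; rw [max_comm]; congr 1; ring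
  have e2 : ((e₂ + 1 + k).toNat : ℤ) = max 0 ((k:ℤ)+1+e₂) := by
    rw [Int.toNat_eq_max]; rw [max_comm]; congr 1; ring
  have hc1 := Int.ofNat_le.mpr hle
  have hc2 := Int.ofNat_le.mpr hGcard
  push_cast [hcard, hcF₁, hcF₂] at hc1
  rw [e1, e2] at hc1
  push_cast at hc2 ⊢
  omega

end TorusTools


section Xseq

lemma cdiv_pos {k m : ℕ} (hk : 1 ≤ k) (hm : 1 ≤ m) : 1 ≤ cdiv k m := by
  rw [cdiv, Nat.le_div_iff_mul_le (by omega)]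
  omega

lemma cdiv_two_le {k m : ℕ} (hm : 1 ≤ m) (hmk : m < k) : 2 ≤ cdiv k m := by
  rw [cdiv, Nat.le_div_iff_mul_le (by omega)]
  omega

lemma cdiv_le {k m : ℕ} (hm : 1 ≤ m) : cdiv k m ≤ k := by
  rw [cdiv, Nat.div_le_iff_le_mul_add_pred (by omega)]
  have : k ≤ m * k := Nat.le_mul_of_pos_left k (by omega)
  omega

lemma le_mul_cdiv (k m : ℕ) (hm : 1 ≤ m) : k ≤ m * cdiv k m := by
  rw [cdiv]
  have h1 := Nat.div_add_mod (k + m - 1) m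
  have h2 : (k + m - 1) % m < m := Nat.mod_lt _ (by omega)
  omega

lemma xseq_b_succ (k m a b i : ℕ) : xseq k m a (b+1) i = xseq k m a b i + 1 := by
  rw [xseq, xseq]
  split <;> omega

lemma xseq_b_le (k m a : ℕ) {b b' : ℕ} (h : b ≤ b') (i : ℕ) :
    xseq k m a b i ≤ xseq k m a b' i := by
  rw [xseq, xseq]
  split <;> omega

lemma xseq_succ (k m a b : ℕ) (hm : 1 ≤ m) {i : ℕ} (hi : i ≤ m + a) :
    xseq k m a b i = xseq k m a b (i+1) + (if i < m then cdiv k m * i else k) := by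
  rcases Nat.lt_or_ge i m with h | h
  · rw [if_pos h, xseq, if_neg (by omega), xseq]
    rcases Nat.lt_or_ge (i+1) m with h2 | h2
    · rw [if_neg (by omega)]
      rw [Finset.sum_eq_sum_Ico_succ_bot (by omega : i < m)]
      ring
    · have h3 : i + 1 = m := by omega
      rw [if_pos (by omega)]
      have h4 : Finset.Ico i m = {i} := by
        rw [← h3]
        exact Nat.Ico_succ_singleton i
      rw [h4, Finset.sum_singleton, h3]
      have h5 : m + a + 1 - m = a + 1 := by omega
      rw [h5]
      try ring
  · rw [if_neg (by omega), xseq, if_pos h, xseq, if_pos (by omega)]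
    have h1 : m + a + 1 - i = (m + a + 1 - (i+1)) + 1 := by omega
    rw [h1]
    ring

lemma xseq_anti (k m a b : ℕ) (hm : 1 ≤ m) {i j : ℕ} (hij : i ≤ j) (hj : j ≤ m + a + 1) :
    xseq k m a b j ≤ xseq k m a b i := by
  induction j with
  | zero =>
    have : i = 0 := by omega
    subst this
    exact le_refl _
  | succ j ih =>
    rcases Nat.eq_or_lt_of_le hij with h | h
    · exact h ▸ le_refl _
    · have h2 := xseq_succ k m a b hm (i := j) (by omega)
      have := ih (by omega) (by omega)
      omega

lemma xseq_top (k m a b : ℕ) : xseq k m a b (m + a + 1) = b := by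
  rw [xseq, if_pos (by omega)]
  simp

lemma xseq_min_width (k m a b : ℕ) (hm : 1 ≤ m) {i : ℕ} (hi : i ≤ m + a) :
    b + k ≤ xseq k m a b i := by
  have h1 := xseq_succ k m a b hm (i := m + a) (by omega)
  rw [xseq_top, if_neg (by omega)] at h1
  have h2 := xseq_anti k m a b hm (i := i) (j := m + a) hi (by omega)
  omega

end Xseq


section Widen

lemma tadd (n : ℕ) (w : Torus n) (p q : ℤ × ℤ) :
    w + proj n p + proj n q = w + proj n (p + q) := by
  rw [add_assoc, ← proj_add]

lemma mem_Scloud (k m a b : ℕ) (p : ℤ × ℤ) (h1 : p.2.natAbs ≤ m + a + 1)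
    (h2 : p.1.natAbs ≤ xseq k m a b p.2.natAbs) : p ∈ Scloud k m a b := ⟨h1, h2⟩

lemma widen {n k m : ℕ} (hm1 : 1 ≤ m) (hmk : m < k) (hkn : 2*k+1 ≤ n) (r : ℤ)
    (hr : r ≤ (cdiv k m : ℤ)) (A : Set (Torus n)) (a b : ℕ) (w : Torus n)
    (hcloud : ∀ p ∈ Scloud k m a b, w + proj n p ∈ majFinal (LAdj n k) r A)
    (hgood : ∀ p : ℤ × ℤ, p.1.natAbs ≤ xseq k m a b 0 + 1 → p.2.natAbs ≤ m+a+1 →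
      MGood n k m A (w + proj n p) ∨ w + proj n p ∈ A) :
    ∀ p ∈ Scloud k m a (b+1), w + proj n p ∈ majFinal (LAdj n k) r A := by
  haveI : NeZero n := ⟨by omega⟩
  intro p hp
  obtain ⟨hi, hx⟩ := hp
  set i := p.2.natAbs with hidef
  set X := xseq k m a b i with hXdef
  by_cases hold : p.1.natAbs ≤ X
  · exact hcloud p ⟨hi, hold⟩
  have hxnew : p.1.natAbs = X + 1 := by
    rw [xseq_b_succ] at hx; omega
  rcases hgood p (by
      have := xseq_anti k m a b hm1 (i := 0) (j := i) (by omega) hi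
      omega) hi with hMG | hA
  swap
  · exact subset_majFinal _ _ _ hA
  have hc2 : 2 ≤ cdiv k m := cdiv_two_le hm1 hmk
  have hck : cdiv k m ≤ k := cdiv_le hm1
  have hmc : k ≤ m * cdiv k m := le_mul_cdiv k m hm1
  have hk1 : 1 ≤ k := by omega
  obtain ⟨sx, hsx, hp1⟩ : ∃ sx : ℤ, (sx = 1 ∨ sx = -1) ∧ p.1 = sx * ((X:ℤ)+1) := by
    by_cases h : p.1 < 0
    · exact ⟨-1, Or.inr rfl, by omega⟩
    · exact ⟨1, Or.inl rfl, by omega⟩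
  obtain ⟨sy, hsy, hsy1, hsy2⟩ : ∃ sy : ℤ, (sy = 1 ∨ sy = -1) ∧
      ((p.2 + sy).natAbs + 1 = i ∨ (i = 0 ∧ (p.2 + sy).natAbs = 1)) ∧
      (p.2 - sy).natAbs = i + 1 := by
    by_cases h : p.2 ≤ 0
    · exact ⟨1, Or.inl rfl, by omega, by omega⟩
    · exact ⟨-1, Or.inr rfl, by omega, by omega⟩
  set i₁ := (p.2 + sy).natAbs with hi₁def
  set X₁ := xseq k m a b i₁ with hX₁def
  have hi₁le : i₁ ≤ m + a := by omega
  have hwidth₁ : k ≤ X₁ := by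
    have := xseq_min_width k m a b hm1 hi₁le
    omega
  have hseg1 : ∀ q : ℤ, -(k:ℤ) ≤ q → q ≤ min (k:ℤ) ((X₁:ℤ) - (X:ℤ) - 1) →
      (w + proj n p) + proj n (sx * q, sy) ∈ majFinal (LAdj n k) r A := by
    intro q hq1 hq2
    rw [tadd]
    refine hcloud _ (mem_Scloud k m a b _ (by show (p.2 + sy).natAbs ≤ m+a+1; omega) ?_)
    show (p.1 + sx * q).natAbs ≤ xseq k m a b (p.2 + sy).natAbs
    rw [hp1, ← hi₁def, ← hX₁def]
    have habs : (sx * ((X:ℤ)+1) + sx * q).natAbs = ((X:ℤ) + 1 + q).natAbs := by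
      rcases hsx with h | h <;> rw [h]
      · simp
      · rw [show (-1) * ((X:ℤ)+1) + (-1) * q = -((X:ℤ)+1+q) by ring, Int.natAbs_neg]
    rw [habs]
    omega
  rcases Nat.lt_or_ge (m + a) i with hiTop | hiMid
  · -- apex row : i = m + a + 1
    have hXb : X = b := by rw [hXdef, show i = m + a + 1 by omega, xseq_top]
    have hX₁b : X₁ = b + k := by
      have h1 := xseq_succ k m a b hm1 (i := m + a) (by omega)
      rw [if_neg (by omega), xseq_top] at h1
      rw [hX₁def, show i₁ = m + a by omega, h1]
    refine step_lemma hk1 hkn r A (w + proj n p) sx sy hsx hsy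
      (min (k:ℤ) ((X₁:ℤ) - (X:ℤ) - 1)) (-(k:ℤ)-1) (min_le_left _ _) (by omega)
      hseg1 (fun q hq1 hq2 => absurd hq2 (by omega)) hMG ?_
    omega
  · -- other rows : i ≤ m + a, the outward row exists
    set i₂ := (p.2 - sy).natAbs with hi₂def
    set X₂ := xseq k m a b i₂ with hX₂def
    have hX₂le : X₂ ≤ X := by
      rw [hX₂def, hXdef]
      exact xseq_anti k m a b hm1 (by omega) (by omega)
    have hwidthX : k ≤ X := by
      have := xseq_min_width k m a b hm1 (i := i) hiMid
      omega
    have hseg2 : ∀ q : ℤ, -(k:ℤ) ≤ q → q ≤ (X₂:ℤ) - (X:ℤ) - 1 →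
        (w + proj n p) + proj n (sx * q, -sy) ∈ majFinal (LAdj n k) r A := by
      intro q hq1 hq2
      rw [tadd]
      have hmm : (p.2 + -sy) = p.2 - sy := by ring
      refine hcloud _ (mem_Scloud k m a b _ (by
        show (p.2 + -sy).natAbs ≤ m+a+1
        rw [hmm]; omega) ?_)
      show (p.1 + sx * q).natAbs ≤ xseq k m a b (p.2 + -sy).natAbs
      rw [hmm, hp1, ← hi₂def, ← hX₂def]
      have habs : (sx * ((X:ℤ)+1) + sx * q).natAbs = ((X:ℤ) + 1 + q).natAbs := by
        rcases hsx with h | h <;> rw [h]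
        · simp
        · rw [show (-1) * ((X:ℤ)+1) + (-1) * q = -((X:ℤ)+1+q) by ring, Int.natAbs_neg]
      rw [habs]
      omega
    refine step_lemma hk1 hkn r A (w + proj n p) sx sy hsx hsy
      (min (k:ℤ) ((X₁:ℤ) - (X:ℤ) - 1)) ((X₂:ℤ) - (X:ℤ) - 1) (min_le_left _ _) (by omega)
      hseg1 hseg2 hMG ?_
    have hs₂ : X = X₂ + (if i < m then cdiv k m * i else k) := by
      rw [hXdef, hX₂def, hsy2]
      exact xseq_succ k m a b hm1 hiMid
    rcases hsy1 with hcase | hcase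
    · -- 1 ≤ i, i₁ + 1 = i
      have hs₁ : X₁ = X + (if i₁ < m then cdiv k m * i₁ else k) := by
        rw [hX₁def, hXdef, show i = i₁ + 1 by omega]
        exact xseq_succ k m a b hm1 (by omega)
      have hPQ : cdiv k m * i = cdiv k m * i₁ + cdiv k m := by
        calc cdiv k m * i = cdiv k m * (i₁ + 1) := by rw [show i₁ + 1 = i from hcase]
        _ = cdiv k m * i₁ + cdiv k m := by ring
      rcases Nat.lt_or_ge i m with him | him
      · rw [if_pos him] at hs₂
        rw [if_pos (by omega)] at hs₁
        omega
      · rw [if_neg (by omega)] at hs₂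
        rcases Nat.lt_or_ge i₁ m with him1 | him1
        · rw [if_pos him1] at hs₁
          have hPc : cdiv k m * i₁ + cdiv k m = m * cdiv k m := by
            calc cdiv k m * i₁ + cdiv k m = (i₁ + 1) * cdiv k m := by ring
            _ = m * cdiv k m := by rw [show i₁ + 1 = m by omega]
          omega
        · rw [if_neg (by omega)] at hs₁
          omega
    · -- i = 0
      obtain ⟨hie0, hi₁1⟩ := hcase
      have hX10 : X₁ = X₂ := by
        rw [hX₁def, hX₂def, hi₁1, hsy2, hie0]
      rw [if_pos (by omega), hie0, Nat.mul_zero] at hs₂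
      omega

end Widen


section Grow

lemma xseq_b_add (k m a b d i : ℕ) : xseq k m a (b + d) i = xseq k m a b i + d := by
  rw [xseq, xseq]; split <;> omega

lemma xseq_a_succ (k m a b : ℕ) {i : ℕ} (hi : i ≤ m + a + 1) :
    xseq k m (a+1) b i = xseq k m a b i + k := by
  rw [xseq, xseq]
  rcases le_or_gt m i with h | h
  · rw [if_pos h, if_pos h]
    have h2 : m + (a+1) + 1 - i = (m + a + 1 - i) + 1 := by omega
    rw [h2, Nat.succ_mul]
    omega
  · rw [if_neg (by omega), if_neg (by omega)]
    ring

lemma widen_to {n k m : ℕ} (hm1 : 1 ≤ m) (hmk : m < k) (hkn : 2*k+1 ≤ n) (r : ℤ)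
    (hr : r ≤ (cdiv k m : ℤ)) (A : Set (Torus n)) (a b : ℕ) (w : Torus n) (b' : ℕ)
    (hbb : b ≤ b')
    (hcloud : ∀ p ∈ Scloud k m a b, w + proj n p ∈ majFinal (LAdj n k) r A)
    (hgood : ∀ p : ℤ × ℤ, p.1.natAbs ≤ xseq k m a b' 0 + 1 → p.2.natAbs ≤ m+a+1 →
      MGood n k m A (w + proj n p) ∨ w + proj n p ∈ A) :
    ∀ p ∈ Scloud k m a b', w + proj n p ∈ majFinal (LAdj n k) r A := by
  induction b' with
  | zero =>
    have : b = 0 := by omega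
    subst this
    exact hcloud
  | succ b'' ih =>
    rcases Nat.eq_or_lt_of_le hbb with h | h
    · subst h
      exact hcloud
    · refine widen hm1 hmk hkn r hr A a b'' w
        (ih (by omega) (fun p h1 h2 => hgood p (by
          have := xseq_b_le k m a (show b'' ≤ b''+1 by omega) 0
          omega) h2)) ?_
      intro p h1 h2
      refine hgood p ?_ h2
      have := xseq_b_le k m a (show b'' ≤ b''+1 by omega) 0
      omega

lemma heighten {n k m : ℕ} (hm1 : 1 ≤ m) (hmk : m < k) (hkn : 2*k+1 ≤ n) (r : ℤ)
    (hr : r ≤ (cdiv k m : ℤ)) (A : Set (Torus n)) (a b : ℕ) (w : Torus n)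
    (hcloud : ∀ p ∈ Scloud k m a (b + k), w + proj n p ∈ majFinal (LAdj n k) r A)
    (hgood : ∀ p : ℤ × ℤ, p.1.natAbs ≤ b → p.2.natAbs = m+a+2 →
      MGood n k m A (w + proj n p) ∨ w + proj n p ∈ A) :
    ∀ p ∈ Scloud k m (a+1) b, w + proj n p ∈ majFinal (LAdj n k) r A := by
  haveI : NeZero n := ⟨by omega⟩
  have hk1 : 1 ≤ k := by omega
  have hc1 : 1 ≤ cdiv k m := cdiv_pos hk1 hm1
  intro p hp
  obtain ⟨hi, hx⟩ := hp
  rcases le_or_gt p.2.natAbs (m + a + 1) with hrow | hrow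
  · -- row already present in S(a, b+k)
    refine hcloud p ⟨hrow, ?_⟩
    rw [xseq_a_succ k m a b hrow] at hx
    rw [xseq_b_add]
    omega
  · -- a new apex row
    have hrow2 : p.2.natAbs = m + a + 2 := by omega
    have hxb : p.1.natAbs ≤ b := by
      rw [show p.2.natAbs = m + (a+1) + 1 by omega, xseq_top] at hx
      exact hx
    rcases hgood p hxb hrow2 with hMG | hA
    swap
    · exact subset_majFinal _ _ _ hA
    obtain ⟨sy, hsy, hsy1⟩ : ∃ sy : ℤ, (sy = 1 ∨ sy = -1) ∧
        (p.2 + sy).natAbs = m + a + 1 := by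
      by_cases h : p.2 ≤ 0
      · exact ⟨1, Or.inl rfl, by omega⟩
      · exact ⟨-1, Or.inr rfl, by omega⟩
    refine step_lemma hk1 hkn r A (w + proj n p) 1 sy (Or.inl rfl) hsy
      (k:ℤ) (-(k:ℤ)-1) le_rfl (by omega)
      ?_ (fun q hq1 hq2 => absurd hq2 (by omega)) hMG (by omega)
    intro q hq1 hq2
    rw [tadd]
    refine hcloud _ (mem_Scloud k m a (b+k) _ (by
      show (p.2 + sy).natAbs ≤ m + a + 1
      omega) ?_)
    show (p.1 + 1 * q).natAbs ≤ xseq k m a (b+k) (p.2 + sy).natAbs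
    rw [hsy1, xseq_top]
    omega

/-- Half-width of the basic cloud, plus 1. -/
def bOne (k m : ℕ) : ℕ := xseq k m 0 0 0 + 1

lemma grow_once {n k m : ℕ} (hm1 : 1 ≤ m) (hmk : m < k) (hkn : 2*k+1 ≤ n) (r : ℤ)
    (hr : r ≤ (cdiv k m : ℤ)) (A : Set (Torus n)) (w : Torus n)
    (hcloud : ∀ p ∈ Scloud k m 0 0, w + proj n p ∈ majFinal (LAdj n k) r A)
    (hgood : ∀ p : ℤ × ℤ, p.1.natAbs ≤ xseq k m 0 (bOne k m + k) 0 + 1 →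
      p.2.natAbs ≤ m + 2 →
      MGood n k m A (w + proj n p) ∨ w + proj n p ∈ A) :
    ∀ p ∈ Scloud k m 1 (bOne k m), w + proj n p ∈ majFinal (LAdj n k) r A := by
  refine heighten hm1 hmk hkn r hr A 0 (bOne k m) w ?_ ?_
  · refine widen_to hm1 hmk hkn r hr A 0 0 w (bOne k m + k) (by omega) hcloud ?_
    intro p h1 h2
    exact hgood p h1 (by omega)
  · intro p h1 h2
    refine hgood p ?_ (by omega)
    have h3 := xseq_min_width k m 0 (bOne k m + k) hm1 (i := 0) (by omega)
    omega

lemma shift_mem (k m : ℕ) (hm1 : 1 ≤ m) (δ p : ℤ × ℤ)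
    (hδ : δ.1.natAbs + δ.2.natAbs ≤ 1) (hp : p ∈ Scloud k m 0 0) :
    δ + p ∈ Scloud k m 1 (bOne k m) := by
  obtain ⟨h1, h2⟩ := hp
  constructor
  · show (δ.2 + p.2).natAbs ≤ m + 1 + 1
    omega
  · show (δ.1 + p.1).natAbs ≤ xseq k m 1 (bOne k m) (δ.2 + p.2).natAbs
    have hb : bOne k m ≤ xseq k m 1 (bOne k m) (δ.2 + p.2).natAbs := by
      have h3 := xseq_anti k m 1 (bOne k m) hm1
        (i := (δ.2 + p.2).natAbs) (j := m + 1 + 1) (by omega) (by omega)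
      rw [xseq_top] at h3
      exact h3
    have h4 : xseq k m 0 0 p.2.natAbs ≤ xseq k m 0 0 0 :=
      xseq_anti k m 0 0 hm1 (by omega) (by omega)
    rw [bOne] at hb ⊢
    omega

end Grow


section Move

lemma proj_zero (n : ℕ) (w : Torus n) : w + proj n (0, 0) = w := by
  apply Prod.ext <;> simp [proj]

lemma l1_step (n : ℕ) (u : Torus n) (δ : ℤ × ℤ)
    (h : δ = (1,0) ∨ δ = (-1,0) ∨ δ = (0,1) ∨ δ = (0,-1)) :
    l1Adj n u (u + proj n δ) := by
  rcases h with rfl | rfl | rfl | rfl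
  · exact Or.inr ⟨by simp [proj], Or.inl (by simp [proj])⟩
  · refine Or.inr ⟨by simp [proj], Or.inr ?_⟩
    show u.1 + ((-1 : ℤ) : ZMod n) = u.1 - 1
    push_cast
    ring
  · exact Or.inl ⟨by simp [proj], Or.inl (by simp [proj])⟩
  · refine Or.inl ⟨by simp [proj], Or.inr ?_⟩
    show u.2 + ((-1 : ℤ) : ZMod n) = u.2 - 1
    push_cast
    ring

lemma steps_proj {n : ℕ} (w : Torus n) (d : ℕ) :
    ∀ p : ℤ × ℤ, p.1.natAbs + p.2.natAbs ≤ d → stepsLe (l1Adj n) d w (w + proj n p) := by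
  induction d with
  | zero =>
    intro p hp
    have h1 : p = (0, 0) := by
      have := p.1.natAbs_eq
      have := p.2.natAbs_eq
      apply Prod.ext <;> simp <;> omega
    show w = w + proj n p
    rw [h1, proj_zero]
  | succ d ih =>
    intro p hp
    by_cases h0 : p.1.natAbs + p.2.natAbs ≤ d
    · exact Or.inl (ih p h0)
    · have hd : p.1.natAbs + p.2.natAbs = d + 1 := by omega
      obtain ⟨q, δ, hq, hδ, hsum⟩ : ∃ q δ : ℤ × ℤ, p = q + δ ∧
          (δ = (1,0) ∨ δ = (-1,0) ∨ δ = (0,1) ∨ δ = (0,-1)) ∧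
          q.1.natAbs + q.2.natAbs ≤ d := by
        rcases lt_trichotomy p.1 0 with h | h | h
        · exact ⟨(p.1 + 1, p.2), (-1, 0), by apply Prod.ext <;> simp <;> ring,
            by tauto, by simp; omega⟩
        · rcases lt_trichotomy p.2 0 with h2 | h2 | h2
          · exact ⟨(p.1, p.2 + 1), (0, -1), by apply Prod.ext <;> simp <;> ring,
              by tauto, by simp; omega⟩
          · exfalso; omega
          · exact ⟨(p.1, p.2 - 1), (0, 1), by apply Prod.ext <;> simp <;> ring,
              by tauto, by simp; omega⟩
        · exact ⟨(p.1 - 1, p.2), (1, 0), by apply Prod.ext <;> simp <;> ring,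
            by tauto, by simp; omega⟩
      refine Or.inr ⟨w + proj n q, ih q hsum, ?_⟩
      have := l1_step n (w + proj n q) δ hδ
      rw [tadd, ← hq] at this
      exact this

lemma radius_le {k m : ℕ} (hm1 : 1 ≤ m) (hmk : m < k) :
    xseq k m 0 (bOne k m + k) 0 + 1 + (m + 2) ≤ 32 * m * k^2 := by
  have hck : cdiv k m ≤ k := cdiv_le hm1
  have hsum : ∑ j ∈ Finset.Ico 0 m, j ≤ m * m := by
    calc ∑ j ∈ Finset.Ico 0 m, j ≤ ∑ _j ∈ Finset.Ico 0 m, m :=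
          Finset.sum_le_sum (fun i hi => le_of_lt (Finset.mem_Ico.mp hi).2)
    _ ≤ m * m := by
          rw [Finset.sum_const, Nat.card_Ico]
          simp
  have hx0 : ∀ b, xseq k m 0 b 0 ≤ b + k + cdiv k m * (m*m) := by
    intro b
    rw [xseq, if_neg (by omega)]
    have h9 := Nat.mul_le_mul_left (cdiv k m) hsum
    omega
  have h1 := hx0 0
  have h2 := hx0 (bOne k m + k)
  have hcmm : cdiv k m * (m*m) ≤ m * (k*k) := by
    calc cdiv k m * (m*m) ≤ k * (m*m) := Nat.mul_le_mul_right _ hck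
    _ ≤ k * (m*k) := Nat.mul_le_mul_left _ (Nat.mul_le_mul_left _ (by omega))
    _ = m * (k*k) := by ring
  have hk2 : k ≤ m * (k*k) := by
    calc k ≤ k * k := Nat.le_mul_of_pos_left k (by omega)
    _ ≤ m * (k*k) := Nat.le_mul_of_pos_left _ (by omega)
  have hm2 : m ≤ m * (k*k) := Nat.le_mul_of_pos_right m (by
    have : 1 ≤ k := by omega
    exact Nat.mul_pos (by omega) (by omega))
  have hgoal : 32 * m * k ^ 2 = 32 * (m * (k*k)) := by ring
  rw [hgoal, bOne] at *
  omega

lemma good_ball {n t k m : ℕ} (A : Set (Torus n)) {c : Cell n t}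
    (hc : CellGood n t k m A c) {w : Torus n} (hw : w ∈ cellSet n t c) (p : ℤ × ℤ)
    (hp : p.1.natAbs + p.2.natAbs ≤ 32*m*k^2) :
    MGood n k m A (w + proj n p) ∨ w + proj n p ∈ A :=
  hc _ ⟨w, hw, steps_proj w _ p hp⟩

lemma cloud_move {n k m t : ℕ} (hm1 : 1 ≤ m) (hmk : m < k) (hkn : 2*k+1 ≤ n) (r : ℤ)
    (hr : r ≤ (cdiv k m : ℤ)) (A : Set (Torus n))
    {c : Cell n t} (hc : CellGood n t k m A c) {w w' : Torus n} (hw : w ∈ cellSet n t c)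
    (hadj : l1Adj n w w')
    (hcloud : ∀ p ∈ Scloud k m 0 0, w + proj n p ∈ majFinal (LAdj n k) r A) :
    ∀ p ∈ Scloud k m 0 0, w' + proj n p ∈ majFinal (LAdj n k) r A := by
  obtain ⟨δ, hδ, hw'⟩ : ∃ δ : ℤ × ℤ,
      (δ = (1,0) ∨ δ = (-1,0) ∨ δ = (0,1) ∨ δ = (0,-1)) ∧ w' = w + proj n δ := by
    rcases hadj with ⟨h1, h2 | h2⟩ | ⟨h1, h2 | h2⟩
    · exact ⟨(0,1), by tauto, by apply Prod.ext <;> simp [proj, ← h1, h2]⟩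
    · refine ⟨(0,-1), by tauto, ?_⟩
      apply Prod.ext
      · simp [proj, ← h1]
      · show w'.2 = w.2 + ((-1 : ℤ) : ZMod n)
        rw [h2]
        push_cast
        ring
    · exact ⟨(1,0), by tauto, by apply Prod.ext <;> simp [proj, ← h1, h2]⟩
    · refine ⟨(-1,0), by tauto, ?_⟩
      apply Prod.ext
      · show w'.1 = w.1 + ((-1 : ℤ) : ZMod n)
        rw [h2]
        push_cast
        ring
      · simp [proj, ← h1]
  have hrad := radius_le hm1 hmk
  have hbig := grow_once hm1 hmk hkn r hr A w hcloud
    (fun p hp1 hp2 => good_ball A hc hw p (by omega))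
  intro p hp
  have hmem := hbig (δ + p)
    (shift_mem k m hm1 δ p (by rcases hδ with rfl | rfl | rfl | rfl <;> simp) hp)
  rw [hw', tadd]
  exact hmem

end Move


section Cells

lemma l1Adj_symm {n : ℕ} {u v : Torus n} (h : l1Adj n u v) : l1Adj n v u := by
  rcases h with ⟨h1, h2 | h2⟩ | ⟨h1, h2 | h2⟩
  · exact Or.inl ⟨h1.symm, Or.inr (by rw [h2]; ring)⟩
  · exact Or.inl ⟨h1.symm, Or.inl (by rw [h2]; ring)⟩
  · exact Or.inr ⟨h1.symm, Or.inr (by rw [h2]; ring)⟩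
  · exact Or.inr ⟨h1.symm, Or.inl (by rw [h2]; ring)⟩

lemma cellEnd_le (n t : ℕ) {i : ℕ} (hi : i ≤ n / t) : cellEnd n t i ≤ n := by
  rw [cellEnd]
  split
  · exact le_rfl
  · calc i * t ≤ (n/t) * t := Nat.mul_le_mul_right t (by omega)
    _ ≤ n := Nat.div_mul_le_self n t

lemma lo_le_cellEnd (n t : ℕ) (ht1 : 1 ≤ t) {i : ℕ} (hi : i < n / t) :
    i * t + 1 ≤ cellEnd n t (i+1) := by
  have key : (i+1) * t ≤ n := by
    calc (i+1) * t ≤ (n/t) * t := Nat.mul_le_mul_right t (by omega)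
    _ ≤ n := Nat.div_mul_le_self n t
  rw [cellEnd]
  split
  · nlinarith
  · nlinarith

lemma mem_cell (n t : ℕ) (c : Cell n t) (x y : ℕ)
    (h1 : c.1.val * t + 1 ≤ x) (h2 : x ≤ cellEnd n t (c.1.val + 1))
    (h3 : c.2.val * t + 1 ≤ y) (h4 : y ≤ cellEnd n t (c.2.val + 1)) :
    ((x : ZMod n), (y : ZMod n)) ∈ cellSet n t c :=
  ⟨x, y, h1, h2, h3, h4, rfl⟩

lemma walk_right {n t : ℕ} (c : Cell n t) (y : ℕ)
    (hy1 : c.2.val * t + 1 ≤ y) (hy2 : y ≤ cellEnd n t (c.2.val+1))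
    (x : ℕ) (hx1 : c.1.val * t + 1 ≤ x) :
    ∀ d : ℕ, x + d ≤ cellEnd n t (c.1.val + 1) →
    Relation.ReflTransGen (fun a b => a ∈ cellSet n t c ∧ b ∈ cellSet n t c ∧ l1Adj n a b)
      ((x : ZMod n), (y : ZMod n)) (((x+d : ℕ) : ZMod n), (y : ZMod n)) := by
  intro d
  induction d with
  | zero => intro _; exact Relation.ReflTransGen.refl
  | succ d ih =>
    intro hd
    refine Relation.ReflTransGen.tail (ih (by omega)) ?_
    refine ⟨mem_cell n t c (x+d) y (by omega) (by omega) hy1 hy2,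
      mem_cell n t c (x+d+1) y (by omega) (by omega) hy1 hy2, Or.inr ⟨rfl, Or.inl ?_⟩⟩
    show (((x+d+1 : ℕ)) : ZMod n) = ((x+d : ℕ) : ZMod n) + 1
    push_cast
    ring

lemma walk_up {n t : ℕ} (c : Cell n t) (x : ℕ)
    (hx1 : c.1.val * t + 1 ≤ x) (hx2 : x ≤ cellEnd n t (c.1.val+1))
    (y : ℕ) (hy1 : c.2.val * t + 1 ≤ y) :
    ∀ d : ℕ, y + d ≤ cellEnd n t (c.2.val + 1) →
    Relation.ReflTransGen (fun a b => a ∈ cellSet n t c ∧ b ∈ cellSet n t c ∧ l1Adj n a b)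
      ((x : ZMod n), (y : ZMod n)) ((x : ZMod n), ((y+d : ℕ) : ZMod n)) := by
  intro d
  induction d with
  | zero => intro _; exact Relation.ReflTransGen.refl
  | succ d ih =>
    intro hd
    refine Relation.ReflTransGen.tail (ih (by omega)) ?_
    refine ⟨mem_cell n t c x (y+d) hx1 hx2 (by omega) (by omega),
      mem_cell n t c x (y+d+1) hx1 hx2 (by omega) (by omega), Or.inl ⟨rfl, Or.inl ?_⟩⟩
    show (((y+d+1 : ℕ)) : ZMod n) = ((y+d : ℕ) : ZMod n) + 1
    push_cast
    ring

lemma cell_rel_symm {n t : ℕ} (c : Cell n t) :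
    Symmetric (fun a b => a ∈ cellSet n t c ∧ b ∈ cellSet n t c ∧ l1Adj n a b) :=
  fun _ _ h => ⟨h.2.1, h.1, l1Adj_symm h.2.2⟩

lemma cell_path {n t : ℕ} (c : Cell n t) {u v : Torus n}
    (hu : u ∈ cellSet n t c) (hv : v ∈ cellSet n t c) :
    Relation.ReflTransGen (fun a b => a ∈ cellSet n t c ∧ b ∈ cellSet n t c ∧ l1Adj n a b)
      u v := by
  obtain ⟨xu, yu, hxu1, hxu2, hyu1, hyu2, rfl⟩ := hu
  obtain ⟨xv, yv, hxv1, hxv2, hyv1, hyv2, rfl⟩ := hv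
  have hsymm : Symmetric (Relation.ReflTransGen
      (fun a b => a ∈ cellSet n t c ∧ b ∈ cellSet n t c ∧ l1Adj n a b)) :=
    fun x y h => (@Relation.ReflTransGen.stdSymm _ _ ⟨fun a b h' => cell_rel_symm c h'⟩).symm x y h
  have px : Relation.ReflTransGen
      (fun a b => a ∈ cellSet n t c ∧ b ∈ cellSet n t c ∧ l1Adj n a b)
      ((xu : ZMod n), (yu : ZMod n)) ((xv : ZMod n), (yu : ZMod n)) := by
    rcases le_total xu xv with h | h
    · have := walk_right c yu hyu1 hyu2 xu hxu1 (xv - xu) (by omega)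
      rwa [show xu + (xv - xu) = xv by omega] at this
    · have := walk_right c yu hyu1 hyu2 xv hxv1 (xu - xv) (by omega)
      rw [show xv + (xu - xv) = xu by omega] at this
      exact hsymm this
  have py : Relation.ReflTransGen
      (fun a b => a ∈ cellSet n t c ∧ b ∈ cellSet n t c ∧ l1Adj n a b)
      ((xv : ZMod n), (yu : ZMod n)) ((xv : ZMod n), (yv : ZMod n)) := by
    rcases le_total yu yv with h | h
    · have := walk_up c xv hxv1 hxv2 yu hyu1 (yv - yu) (by omega)
      rwa [show yu + (yv - yu) = yv by omega] at this
    · have := walk_up c xv hxv1 hxv2 yv hyv1 (yu - yv) (by omega)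
      rw [show yv + (yu - yv) = yu by omega] at this
      exact hsymm this
  exact px.trans py

lemma zmod_succ_val {N : ℕ} [NeZero N] (x x' : ZMod N) (h : x' = x + 1) :
    (x'.val = x.val + 1 ∧ x.val + 1 < N) ∨ (x'.val = 0 ∧ x.val + 1 = N) := by
  have hx : x.val < N := ZMod.val_lt x
  have h1v : (1 : ZMod N).val = 1 % N := by
    rw [← Nat.cast_one, ZMod.val_natCast]
  have hval : x'.val = (x.val + 1) % N := by
    rw [h, ZMod.val_add, h1v]
    conv_rhs => rw [Nat.add_mod]
    rw [Nat.mod_eq_of_lt hx]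
  rcases Nat.lt_or_ge (x.val + 1) N with h2 | h2
  · exact Or.inl ⟨by rw [hval, Nat.mod_eq_of_lt h2], h2⟩
  · have h3 : x.val + 1 = N := by omega
    exact Or.inr ⟨by rw [hval, h3, Nat.mod_self], h3⟩

lemma bridge_x {n t : ℕ} (ht1 : 1 ≤ t) (htn : t ≤ n) (c c' : Cell n t)
    (hx : c'.1 = c.1 + 1) (hy : c.2 = c'.2) :
    ∃ u ∈ cellSet n t c, ∃ v ∈ cellSet n t c', l1Adj n u v := by
  haveI : NeZero (n/t) := ⟨by
    have := (Nat.one_le_div_iff (show 0 < t by omega)).mpr htn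
    omega⟩
  have hc2 : c.2.val < n / t := ZMod.val_lt c.2
  have hc'1 : c'.1.val < n / t := ZMod.val_lt c'.1
  have hc1 : c.1.val < n / t := ZMod.val_lt c.1
  have hyval : c'.2.val = c.2.val := by rw [hy]
  set y := c.2.val * t + 1 with hydef
  have hy2 : y ≤ cellEnd n t (c.2.val + 1) := lo_le_cellEnd n t ht1 hc2
  refine ⟨((cellEnd n t (c.1.val + 1) : ℕ), (y : ZMod n)),
    mem_cell n t c _ y (lo_le_cellEnd n t ht1 hc1) le_rfl le_rfl hy2,
    ((c'.1.val * t + 1 : ℕ), (y : ZMod n)),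
    mem_cell n t c' _ y le_rfl (lo_le_cellEnd n t ht1 hc'1) (by rw [hyval]) (by rw [hyval]; exact hy2),
    Or.inr ⟨rfl, Or.inl ?_⟩⟩
  rcases zmod_succ_val c.1 c'.1 hx with ⟨h1, h2⟩ | ⟨h1, h2⟩
  · rw [h1, cellEnd, if_neg (by omega)]
    push_cast
    ring
  · rw [h1, cellEnd, if_pos h2]
    simp

lemma bridge_y {n t : ℕ} (ht1 : 1 ≤ t) (htn : t ≤ n) (c c' : Cell n t)
    (hx : c'.2 = c.2 + 1) (hy : c.1 = c'.1) :
    ∃ u ∈ cellSet n t c, ∃ v ∈ cellSet n t c', l1Adj n u v := by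
  haveI : NeZero (n/t) := ⟨by
    have := (Nat.one_le_div_iff (show 0 < t by omega)).mpr htn
    omega⟩
  have hc2 : c.2.val < n / t := ZMod.val_lt c.2
  have hc'2 : c'.2.val < n / t := ZMod.val_lt c'.2
  have hc1 : c.1.val < n / t := ZMod.val_lt c.1
  have hyval : c'.1.val = c.1.val := by rw [hy]
  set x := c.1.val * t + 1 with hxdef
  have hx2 : x ≤ cellEnd n t (c.1.val + 1) := lo_le_cellEnd n t ht1 hc1
  refine ⟨((x : ZMod n), (cellEnd n t (c.2.val + 1) : ℕ)),
    mem_cell n t c x _ le_rfl hx2 (lo_le_cellEnd n t ht1 hc2) le_rfl,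
    ((x : ZMod n), (c'.2.val * t + 1 : ℕ)),
    mem_cell n t c' x _ (by rw [hyval]) (by rw [hyval]; exact hx2) le_rfl (lo_le_cellEnd n t ht1 hc'2),
    Or.inl ⟨rfl, Or.inl ?_⟩⟩
  rcases zmod_succ_val c.2 c'.2 hx with ⟨h1, h2⟩ | ⟨h1, h2⟩
  · rw [h1, cellEnd, if_neg (by omega)]
    push_cast
    ring
  · rw [h1, cellEnd, if_pos h2]
    simp

lemma bridge {n t : ℕ} (ht1 : 1 ≤ t) (htn : t ≤ n) (c c' : Cell n t)
    (hadj : l1Adj (n/t) c c') :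
    ∃ u ∈ cellSet n t c, ∃ v ∈ cellSet n t c', l1Adj n u v := by
  rcases hadj with ⟨h1, h2 | h2⟩ | ⟨h1, h2 | h2⟩
  · exact bridge_y ht1 htn c c' h2 h1
  · obtain ⟨u, hu, v, hv, hadj'⟩ := bridge_y ht1 htn c' c (by rw [h2]; ring) h1.symm
    exact ⟨v, hv, u, hu, l1Adj_symm hadj'⟩
  · exact bridge_x ht1 htn c c' h2 h1
  · obtain ⟨u, hu, v, hv, hadj'⟩ := bridge_x ht1 htn c' c (by rw [h2]; ring) h1.symm
    exact ⟨v, hv, u, hu, l1Adj_symm hadj'⟩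

end Cells


section Final

lemma spread {n k m t : ℕ} (hm1 : 1 ≤ m) (hmk : m < k) (hkn : 2*k+1 ≤ n) (r : ℤ)
    (hr : r ≤ (cdiv k m : ℤ)) (A : Set (Torus n)) (Z : Set (Cell n t))
    (hgood : ∀ c ∈ Z, CellGood n t k m A c) {w₀ u : Torus n}
    (hpath : Relation.ReflTransGen (fun x y =>
      (∃ c ∈ Z, x ∈ cellSet n t c) ∧ (∃ c ∈ Z, y ∈ cellSet n t c) ∧ l1Adj n x y) w₀ u)
    (hcloud : ∀ p ∈ Scloud k m 0 0, w₀ + proj n p ∈ majFinal (LAdj n k) r A) :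
    ∀ p ∈ Scloud k m 0 0, u + proj n p ∈ majFinal (LAdj n k) r A := by
  induction hpath with
  | refl => exact hcloud
  | tail h1 h2 ih =>
    obtain ⟨⟨c, hc, hxmem⟩, _, hadj⟩ := h2
    exact cloud_move hm1 hmk hkn r hr A (hgood c hc) hxmem hadj ih

lemma reach {n t : ℕ} (ht1 : 1 ≤ t) (htn : t ≤ n) (Z : Set (Cell n t))
    (hconn : ConnIn (l1Adj (n/t)) Z) {c₀ c : Cell n t} (hc₀ : c₀ ∈ Z) (hc : c ∈ Z)
    {w₀ u : Torus n} (hw₀ : w₀ ∈ cellSet n t c₀) (hu : u ∈ cellSet n t c) :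
    Relation.ReflTransGen (fun x y =>
      (∃ c' ∈ Z, x ∈ cellSet n t c') ∧ (∃ c' ∈ Z, y ∈ cellSet n t c') ∧ l1Adj n x y)
      w₀ u := by
  have hcells := hconn c₀ hc₀ c hc
  have key : ∀ {c' : Cell n t},
      Relation.ReflTransGen (fun a b => a ∈ Z ∧ b ∈ Z ∧ l1Adj (n/t) a b) c₀ c' →
      ∃ v ∈ cellSet n t c', c' ∈ Z ∧ Relation.ReflTransGen (fun x y =>
        (∃ c'' ∈ Z, x ∈ cellSet n t c'') ∧ (∃ c'' ∈ Z, y ∈ cellSet n t c'') ∧ l1Adj n x y)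
        w₀ v := by
    intro c' h
    induction h with
    | refl => exact ⟨w₀, hw₀, hc₀, Relation.ReflTransGen.refl⟩
    | tail h1 h2 ih =>
      obtain ⟨v₁, hv₁, hc₁Z, hp₁⟩ := ih
      obtain ⟨hbZ, hcZ, hadj⟩ := h2
      obtain ⟨u₁, hu₁, u₂, hu₂, hadj'⟩ := bridge ht1 htn _ _ hadj
      have hwalk' : Relation.ReflTransGen (fun x y =>
          (∃ c'' ∈ Z, x ∈ cellSet n t c'') ∧ (∃ c'' ∈ Z, y ∈ cellSet n t c'') ∧ l1Adj n x y)
          v₁ u₁ :=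
        Relation.ReflTransGen.mono
          (fun x y hxy => ⟨⟨_, hbZ, hxy.1⟩, ⟨_, hbZ, hxy.2.1⟩, hxy.2.2⟩) _ _
          (cell_path _ hv₁ hu₁)
      exact ⟨u₂, hu₂, hcZ,
        (hp₁.trans hwalk').tail ⟨⟨_, hbZ, hu₁⟩, ⟨_, hcZ, hu₂⟩, hadj'⟩⟩
  obtain ⟨v, hv, hcZ, hp⟩ := key hcells
  have hwalk2 : Relation.ReflTransGen (fun x y =>
      (∃ c' ∈ Z, x ∈ cellSet n t c') ∧ (∃ c' ∈ Z, y ∈ cellSet n t c') ∧ l1Adj n x y)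
      v u :=
    Relation.ReflTransGen.mono
      (fun x y hxy => ⟨⟨c, hc, hxy.1⟩, ⟨c, hc, hxy.2.1⟩, hxy.2.2⟩) _ _
      (cell_path c hv hu)
  exact hp.trans hwalk2

end Final

end Maj5

/-- Corollary 2.3 of the paper. If `Z` is an `ℓ₁`-connected set of `m`-good
cells of the `t`-tessellation containing a seed, then in the `r`-majority bootstrap
percolation process on `L(n,k)` all cells of `Z` eventually become active. -/
theorem statement_5 (n k m t : ℕ) (r : ℤ) (hm1 : 1 ≤ m) (hmk : m < k)
    (hr : r ≤ (cdiv k m : ℤ)) (ht1 : 1 ≤ t) (htn : t ≤ n) (hkn : 2 * k + 1 ≤ n)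
    (A : Set (Torus n)) (Z : Set (Cell n t))
    (hconn : ConnIn (l1Adj (n / t)) Z)
    (hgood : ∀ c ∈ Z, CellGood n t k m A c)
    (hseed : ∃ c ∈ Z, IsSeed n t k m A c) :
    ∀ c ∈ Z, cellSet n t c ⊆ majFinal (LAdj n k) r A := by
  intro c hc u hu
  haveI : NeZero n := ⟨by omega⟩
  obtain ⟨c₀, hc₀, w₀, hseedspec⟩ := hseed
  have h00 : ((0 : ℤ), (0 : ℤ)) ∈ Scloud k m 0 0 := ⟨by simp, by simp⟩
  have hw₀ : w₀ ∈ cellSet n t c₀ := by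
    have := (hseedspec ((0 : ℤ), (0 : ℤ)) h00).2
    rwa [Maj5.proj_zero] at this
  have hcloud₀ : ∀ p ∈ Scloud k m 0 0, w₀ + proj n p ∈ majFinal (LAdj n k) r A :=
    fun p hp => Maj5.subset_majFinal _ _ _ (hseedspec p hp).1
  have hpath := Maj5.reach ht1 htn Z hconn hc₀ hc hw₀ hu
  have hcloudu := Maj5.spread hm1 hmk hkn r hr A Z hgood hpath hcloud₀
  have hfin := hcloudu ((0 : ℤ), (0 : ℤ)) h00
  rwa [Maj5.proj_zero] at hfin
end
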